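/- arXiv:2408.08457 — 4 statements merged into one kernel-verified Lean document; each statement's English description precedes it below -/
import Mathlib

section
/- Let G=(V,E) be a finite simple graph, let μ be the Bernoulli bond-percolation product measure on Ω={0,1}^E, and let (C₁,C₂) be sampled from μ×μ. Let T be any decision tree for pairs of configurations and let S=S(C₁,C₂) be the random edge set it builds. Then the two random configurations C₁→_S C₂ and C₁→_{E∖S} C₂ are independent, and each has distribution μ. -/
/-!
Statement 0: For a finite simple graph `G`, Bernoulli bond percolation measure `μ` on
`Ω = {0,1}^E`, a pair `(C₁, C₂)` sampled from `μ × μ`, and any decision tree `T` for pairs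
of configurations building the random edge set `S = S(C₁,C₂)`, the configurations
`C₁ →_S C₂` and `C₁ →_{E∖S} C₂` are independent, each distributed as `μ`.
-/

namespace DTPerc

variable {E : Type*} [Fintype E] [DecidableEq E]

/-- Bernoulli product weight of a configuration. -/
noncomputable def wt (p : E → ℝ) (C : E → Bool) : ℝ :=
  ∏ e, if C e then p e else 1 - p e

/-- Probability of an event under the Bernoulli product measure. -/
noncomputable def Pr (p : E → ℝ) (A : Set (E → Bool)) : ℝ :=
  ∑ C : E → Bool, A.indicator (wt p) C

/-- Probability of an event for an independent pair `(C₁, C₂) ~ μ × μ`. -/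
noncomputable def Pr2 (p : E → ℝ) (A : Set ((E → Bool) × (E → Bool))) : ℝ :=
  ∑ x : (E → Bool) × (E → Bool), A.indicator (fun y => wt p y.1 * wt p y.2) x

/-- A decision tree for pairs of configurations: every decision node queries an edge,
decides whether it goes to `S` (`toS = true`) or to `S̄`, and has four children indexed
by the pair of revealed values of the edge in the two configurations. -/
inductive PairTree (E : Type u) : Type u
  | leaf : PairTree E
  | node (e : E) (toS : Bool) (child : Bool → Bool → PairTree E) : PairTree E

/-- The edges queried along any root-to-leaf path are pairwise distinct
(`used` is the set of edges already queried above the current node). -/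
def PairTree.valid : PairTree E → Finset E → Prop
  | .leaf, _ => True
  | .node e _ child, used =>
      e ∉ used ∧ ∀ b₁ b₂ : Bool, (child b₁ b₂).valid (insert e used)

/-- The set `S(C₁, C₂)` built by the decision tree. -/
def PairTree.buildS : PairTree E → (E → Bool) → (E → Bool) → Finset E
  | .leaf, _, _ => ∅
  | .node e toS child, C₁, C₂ =>
      let rest := (child (C₁ e) (C₂ e)).buildS C₁ C₂
      if toS then insert e rest else rest

/-- `C₁ →_S C₂`: the configuration equal to `C₁` on `S` and to `C₂` off `S`. -/
def splice (S : Finset E) (C₁ C₂ : E → Bool) : E → Bool :=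
  fun e => if e ∈ S then C₁ e else C₂ e

/-! ### Auxiliary lemmas -/

lemma buildS_node (e : E) (toS : Bool) (child : Bool → Bool → PairTree E)
    (C₁ C₂ : E → Bool) :
    (PairTree.node e toS child).buildS C₁ C₂ =
      if toS then insert e ((child (C₁ e) (C₂ e)).buildS C₁ C₂)
      else (child (C₁ e) (C₂ e)).buildS C₁ C₂ := rfl

lemma buildS_not_mem_used : ∀ (T : PairTree E) (used : Finset E), T.valid used →
    ∀ (C₁ C₂ : E → Bool) (a : E), a ∈ T.buildS C₁ C₂ → a ∉ used
  | .leaf, used, _, C₁, C₂, a, ha => by simp [PairTree.buildS] at ha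
  | .node e toS child, used, hv, C₁, C₂, a, ha => by
    obtain ⟨he, hc⟩ := hv
    rw [buildS_node] at ha
    intro hau
    by_cases ht : toS
    · rw [if_pos ht, Finset.mem_insert] at ha
      rcases ha with rfl | ha
      · exact he hau
      · exact buildS_not_mem_used _ _ (hc _ _) C₁ C₂ a ha (Finset.mem_insert_of_mem hau)
    · rw [if_neg ht] at ha
      exact buildS_not_mem_used _ _ (hc _ _) C₁ C₂ a ha (Finset.mem_insert_of_mem hau)

/-- The map `(C₁,C₂) ↦ (C₁ →_S C₂, C₁ →_{Sᶜ} C₂)`. -/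
def Phi (T : PairTree E) (x : (E → Bool) × (E → Bool)) : (E → Bool) × (E → Bool) :=
  (splice (T.buildS x.1 x.2) x.1 x.2, splice (T.buildS x.1 x.2)ᶜ x.1 x.2)

lemma Phi_fst (T : PairTree E) (x : (E → Bool) × (E → Bool)) (a : E) :
    (Phi T x).1 a = if a ∈ T.buildS x.1 x.2 then x.1 a else x.2 a := rfl

lemma Phi_snd (T : PairTree E) (x : (E → Bool) × (E → Bool)) (a : E) :
    (Phi T x).2 a = if a ∈ T.buildS x.1 x.2 then x.2 a else x.1 a := by
  by_cases hmem : a ∈ T.buildS x.1 x.2 <;> simp [Phi, splice, hmem]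

lemma Phi_injective : ∀ (T : PairTree E) (used : Finset E), T.valid used →
    Function.Injective (Phi (E := E) T)
  | .leaf, used, _ => by
    intro x x' h
    have key : ∀ y : (E → Bool) × (E → Bool),
        Phi (PairTree.leaf : PairTree E) y = (y.2, y.1) := by
      intro y
      refine Prod.ext ?_ ?_ <;> funext a <;> simp [Phi, PairTree.buildS, splice]
    rw [key, key] at h
    exact Prod.ext (congrArg Prod.snd h) (congrArg Prod.fst h)
  | .node e toS child, used, hv => by
    obtain ⟨he, hc⟩ := hv
    intro x x' h
    have hrest : e ∉ (child (x.1 e) (x.2 e)).buildS x.1 x.2 := fun hmem =>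
      buildS_not_mem_used _ _ (hc _ _) _ _ _ hmem (Finset.mem_insert_self e used)
    have hrest' : e ∉ (child (x'.1 e) (x'.2 e)).buildS x'.1 x'.2 := fun hmem =>
      buildS_not_mem_used _ _ (hc _ _) _ _ _ hmem (Finset.mem_insert_self e used)
    have heS : e ∈ (PairTree.node e toS child).buildS x.1 x.2 ↔ toS = true := by
      rw [buildS_node]; cases toS <;> simp [hrest]
    have heS' : e ∈ (PairTree.node e toS child).buildS x'.1 x'.2 ↔ toS = true := by
      rw [buildS_node]; cases toS <;> simp [hrest']
    have H1 : ∀ a, (Phi (PairTree.node e toS child) x).1 a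
        = (Phi (PairTree.node e toS child) x').1 a := fun a => by rw [h]
    have H2 : ∀ a, (Phi (PairTree.node e toS child) x).2 a
        = (Phi (PairTree.node e toS child) x').2 a := fun a => by rw [h]
    -- values at `e` agree
    have e1 : x.1 e = x'.1 e := by
      cases htS : toS
      · subst htS
        have h0 := H2 e
        rw [Phi_snd, Phi_snd, if_neg (by simp [heS]), if_neg (by simp [heS'])] at h0
        exact h0
      · subst htS
        have h0 := H1 e
        rw [Phi_fst, Phi_fst, if_pos (heS.mpr rfl), if_pos (heS'.mpr rfl)] at h0
        exact h0
    have e2 : x.2 e = x'.2 e := by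
      cases htS : toS
      · subst htS
        have h0 := H1 e
        rw [Phi_fst, Phi_fst, if_neg (by simp [heS]), if_neg (by simp [heS'])] at h0
        exact h0
      · subst htS
        have h0 := H2 e
        rw [Phi_snd, Phi_snd, if_pos (heS.mpr rfl), if_pos (heS'.mpr rfl)] at h0
        exact h0
    rw [← e1, ← e2] at hrest'
    have haS : ∀ a, a ≠ e →
        ((a ∈ (PairTree.node e toS child).buildS x.1 x.2) ↔
          a ∈ (child (x.1 e) (x.2 e)).buildS x.1 x.2) := by
      intro a ha; rw [buildS_node]; cases toS <;> simp [ha]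
    have haS' : ∀ a, a ≠ e →
        ((a ∈ (PairTree.node e toS child).buildS x'.1 x'.2) ↔
          a ∈ (child (x.1 e) (x.2 e)).buildS x'.1 x'.2) := by
      intro a ha; rw [buildS_node, ← e1, ← e2]; cases toS <;> simp [ha]
    refine Phi_injective (child (x.1 e) (x.2 e)) (insert e used) (hc _ _) ?_
    refine Prod.ext ?_ ?_ <;> funext a <;> by_cases hae : a = e
    · subst hae
      rw [Phi_fst, Phi_fst, if_neg hrest, if_neg hrest']; exact e2
    · rw [Phi_fst, Phi_fst,
        if_congr (haS a hae).symm rfl rfl, if_congr (haS' a hae).symm rfl rfl,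
        ← Phi_fst, ← Phi_fst]
      exact H1 a
    · subst hae
      rw [Phi_snd, Phi_snd, if_neg hrest, if_neg hrest']; exact e1
    · rw [Phi_snd, Phi_snd,
        if_congr (haS a hae).symm rfl rfl, if_congr (haS' a hae).symm rfl rfl,
        ← Phi_snd, ← Phi_snd]
      exact H2 a

lemma wt_splice_mul (p : E → ℝ) (S : Finset E) (C₁ C₂ : E → Bool) :
    wt p (splice S C₁ C₂) * wt p (splice Sᶜ C₁ C₂) = wt p C₁ * wt p C₂ := by
  unfold wt
  rw [← Finset.prod_mul_distrib, ← Finset.prod_mul_distrib]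
  refine Finset.prod_congr rfl fun a _ => ?_
  by_cases h : a ∈ S <;> simp [splice, h, mul_comm]

lemma wt_Phi (p : E → ℝ) (T : PairTree E) (x : (E → Bool) × (E → Bool)) :
    wt p (Phi T x).1 * wt p (Phi T x).2 = wt p x.1 * wt p x.2 :=
  wt_splice_mul p _ x.1 x.2

lemma sum_comp_Phi (p : E → ℝ) (T : PairTree E) (hT : T.valid ∅)
    (F : ((E → Bool) × (E → Bool)) → ℝ) :
    ∑ x : (E → Bool) × (E → Bool), wt p x.1 * wt p x.2 * F (Phi T x)
      = ∑ y : (E → Bool) × (E → Bool), wt p y.1 * wt p y.2 * F y := by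
  have hbij : Function.Bijective (Phi (E := E) T) :=
    Finite.injective_iff_bijective.mp (Phi_injective T ∅ hT)
  rw [← Equiv.sum_comp (Equiv.ofBijective _ hbij)
    (fun y => wt p y.1 * wt p y.2 * F y)]
  refine Finset.sum_congr rfl fun x _ => ?_
  show wt p x.1 * wt p x.2 * F (Phi T x)
      = wt p (Phi T x).1 * wt p (Phi T x).2 * F (Phi T x)
  rw [wt_Phi]

lemma sum_wt (p : E → ℝ) : ∑ C : E → Bool, wt p C = 1 := by
  classical
  have h := Finset.prod_univ_sum (fun _ : E => (Finset.univ : Finset Bool))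
      (fun e b => if b then p e else 1 - p e)
  rw [Fintype.piFinset_univ] at h
  unfold wt
  rw [← h]
  refine Finset.prod_eq_one fun e _ => ?_
  rw [Fintype.sum_bool]
  norm_num

lemma Pr_eq (p : E → ℝ) (A : Set (E → Bool)) [DecidablePred (· ∈ A)] :
    Pr p A = ∑ C : E → Bool, wt p C * (if C ∈ A then 1 else 0) := by
  unfold Pr
  refine Finset.sum_congr rfl fun C _ => ?_
  rw [Set.indicator_apply]
  by_cases h : C ∈ A <;> simp [h]

lemma master (p : E → ℝ) (T : PairTree E) (hT : T.valid ∅)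
    (A B : Set (E → Bool)) :
    Pr2 p {x | splice (T.buildS x.1 x.2) x.1 x.2 ∈ A ∧
               splice (T.buildS x.1 x.2)ᶜ x.1 x.2 ∈ B} = Pr p A * Pr p B := by
  classical
  have step1 : Pr2 p {x | splice (T.buildS x.1 x.2) x.1 x.2 ∈ A ∧
      splice (T.buildS x.1 x.2)ᶜ x.1 x.2 ∈ B}
      = ∑ x : (E → Bool) × (E → Bool), wt p x.1 * wt p x.2 *
          ((if (Phi T x).1 ∈ A then 1 else 0) * (if (Phi T x).2 ∈ B then 1 else 0)) := by
    unfold Pr2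
    refine Finset.sum_congr rfl fun x _ => ?_
    rw [Set.indicator_apply]
    by_cases h1 : splice (T.buildS x.1 x.2) x.1 x.2 ∈ A <;>
      by_cases h2 : splice (T.buildS x.1 x.2)ᶜ x.1 x.2 ∈ B <;>
      simp [Phi, h1, h2]
  rw [step1, sum_comp_Phi p T hT
    (fun y => (if y.1 ∈ A then 1 else 0) * (if y.2 ∈ B then 1 else 0))]
  rw [Fintype.sum_prod_type]
  rw [Pr_eq p A, Pr_eq p B, Finset.sum_mul_sum]
  refine Finset.sum_congr rfl fun y₁ _ => Finset.sum_congr rfl fun y₂ _ => ?_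
  ring

lemma Pr_univ (p : E → ℝ) : Pr p (Set.univ : Set (E → Bool)) = 1 := by
  unfold Pr
  rw [Set.indicator_univ]
  exact sum_wt p

theorem decision_tree_independence
    {V : Type*} [Fintype V] [DecidableEq V] (G : SimpleGraph V) [DecidableRel G.Adj]
    (p : G.edgeSet → ℝ) (hp : ∀ e, 0 ≤ p e ∧ p e ≤ 1)
    (T : PairTree G.edgeSet) (hT : T.valid ∅) :
    (∀ A : Set (G.edgeSet → Bool),
      Pr2 p {x | splice (T.buildS x.1 x.2) x.1 x.2 ∈ A} = Pr p A) ∧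
    (∀ B : Set (G.edgeSet → Bool),
      Pr2 p {x | splice (T.buildS x.1 x.2)ᶜ x.1 x.2 ∈ B} = Pr p B) ∧
    (∀ A B : Set (G.edgeSet → Bool),
      Pr2 p {x | splice (T.buildS x.1 x.2) x.1 x.2 ∈ A ∧
                 splice (T.buildS x.1 x.2)ᶜ x.1 x.2 ∈ B} = Pr p A * Pr p B) := by
  refine ⟨?_, ?_, fun A B => master p T hT A B⟩
  · intro A
    have h := master p T hT A Set.univ
    rw [Pr_univ, mul_one] at h
    rw [← h]
    congr 1
    ext x
    simp
  · intro B
    have h := master p T hT Set.univ B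
    rw [Pr_univ, one_mul] at h
    rw [← h]
    congr 1
    ext x
    simp

end DTPerc
end

section
/- (Cauchy–Schwarz bound for decision trees.) Let G=(V,E) be a finite simple graph, let μ be the Bernoulli bond-percolation product measure on Ω={0,1}^E, and let (C₁,C₂) be sampled from μ×μ. Let T₁ and T₂ be decision trees for pairs of configurations such that T₂ continues T₁, every node of T₁ has decision S, T₁ decides an event A⊆Ω, and T₂ decides an event B⊆Ω, where B=A∩M for some event M⊆Ω that is closed upward or closed downward, and μ(A)>0. Let S₂=S₂(C₁,C₂) be the edge set built by T₂. Then P(C₁∈B and C₁→_{S₂} C₂∈B) ≥ μ(B)²/μ(A). -/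
namespace DTPerc

variable {E : Type*} [Fintype E] [DecidableEq E]

/-- An event is closed upward if it is preserved by opening more edges. -/
def UpwardClosed (A : Set (E → Bool)) : Prop :=
  ∀ C₁ C₂ : E → Bool, C₁ ∈ A → (∀ e, C₁ e = true → C₂ e = true) → C₂ ∈ A

/-- An event is closed downward if it is preserved by closing more edges. -/
def DownwardClosed (A : Set (E → Bool)) : Prop :=
  ∀ C₁ C₂ : E → Bool, C₁ ∈ A → (∀ e, C₂ e = true → C₁ e = true) → C₂ ∈ A

/-- `Continues T₂ T₁`: `T₂` continues `T₁`, i.e. `T₁` is an ancestor-closed subtree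
of `T₂` with the same queried edges and decisions on shared nodes. -/
inductive Continues : PairTree E → PairTree E → Prop
  | leaf (T : PairTree E) : Continues T .leaf
  | node (e : E) (toS : Bool) (ch₂ ch₁ : Bool → Bool → PairTree E)
      (h : ∀ b₁ b₂ : Bool, Continues (ch₂ b₁ b₂) (ch₁ b₁ b₂)) :
      Continues (.node e toS ch₂) (.node e toS ch₁)

/-- Every node of the tree has decision `S`. -/
def PairTree.allS : PairTree E → Prop
  | .leaf => True
  | .node _ toS child => toS = true ∧ ∀ b₁ b₂ : Bool, (child b₁ b₂).allS

/-- The set of edges revealed by the tree on the pair `(C₁, C₂)`. -/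
def PairTree.revealed : PairTree E → (E → Bool) → (E → Bool) → Finset E
  | .leaf, _, _ => ∅
  | .node e _ child, C₁, C₂ => insert e ((child (C₁ e) (C₂ e)).revealed C₁ C₂)

/-- The tree `T` decides the event `A`: for every leaf, the values of `C₁`
revealed along the root-to-leaf path determine whether `C₁ ∈ A`. -/
def PairTree.Decides (T : PairTree E) (A : Set (E → Bool)) : Prop :=
  ∀ C₁ C₂ C₁' : E → Bool,
    (∀ e ∈ T.revealed C₁ C₂, C₁' e = C₁ e) → (C₁ ∈ A ↔ C₁' ∈ A)

set_option linter.unusedSectionVars false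

/-- weight of a single bit. -/
noncomputable def bw (p : E → ℝ) (e : E) (b : Bool) : ℝ := if b then p e else 1 - p e

omit [DecidableEq E] in
lemma wt_eq_prod (p : E → ℝ) (C : E → Bool) : wt p C = ∏ e, bw p e (C e) := rfl

lemma bw_sum (p : E → ℝ) (e : E) : bw p e true + bw p e false = 1 := by
  simp [bw]

lemma bw_nonneg {p : E → ℝ} (hp : ∀ e, 0 ≤ p e ∧ p e ≤ 1) (e : E) (b : Bool) :
    0 ≤ bw p e b := by
  cases b <;> simp [bw] <;> [linarith [(hp e).2]; exact (hp e).1]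

lemma wt_nonneg {p : E → ℝ} (hp : ∀ e, 0 ≤ p e ∧ p e ≤ 1) (C : E → Bool) :
    0 ≤ wt p C := by
  rw [wt_eq_prod]
  exact Finset.prod_nonneg fun e _ => bw_nonneg hp e (C e)

lemma sum_split (e : E) (F : (E → Bool) → ℝ) :
    ∑ C : E → Bool, F C = ∑ b : Bool, ∑ C : E → Bool, (if C e = b then F C else 0) := by
  rw [Finset.sum_comm]
  refine Finset.sum_congr rfl fun C _ => ?_
  rw [Fintype.sum_bool]
  cases h : C e <;> simp [h]

lemma sum_ite_fiber_eq (e : E) {G : (E → Bool) → ℝ}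
    (hG : ∀ C b, G (Function.update C e b) = G C) (b b' : Bool) :
    ∑ C : E → Bool, (if C e = b then G C else 0)
      = ∑ C : E → Bool, (if C e = b' then G C else 0) := by
  rw [← Finset.sum_filter, ← Finset.sum_filter]
  refine Finset.sum_nbij' (fun C => Function.update C e b') (fun C => Function.update C e b)
    ?_ ?_ ?_ ?_ ?_
  · intro a ha; simp [Function.update_self]
  · intro a ha; simp [Function.update_self]
  · intro a ha
    simp only [Finset.mem_filter] at ha
    show Function.update (Function.update a e b') e b = a
    rw [Function.update_idem, ← ha.2, Function.update_eq_self]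
  · intro a ha
    simp only [Finset.mem_filter] at ha
    show Function.update (Function.update a e b) e b' = a
    rw [Function.update_idem, ← ha.2, Function.update_eq_self]
  · intro a _; rw [hG]

lemma sum_decomp (p : E → ℝ) (e : E) (f : (E → Bool) → ℝ) :
    ∑ C : E → Bool, wt p C * f C
      = ∑ b : Bool, bw p e b * ∑ C : E → Bool, wt p C * f (Function.update C e b) := by
  set wtE : (E → Bool) → ℝ := fun C => ∏ x ∈ Finset.univ.erase e, bw p x (C x) with hwtE
  have hfac : ∀ C : E → Bool, wt p C = bw p e (C e) * wtE C := by
    intro C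
    rw [wt_eq_prod]
    exact (Finset.mul_prod_erase _ _ (Finset.mem_univ e)).symm
  have hE : ∀ (C : E → Bool) (b : Bool), wtE (Function.update C e b) = wtE C := by
    intro C b
    exact Finset.prod_congr rfl fun x hx => by
      rw [Function.update_of_ne (Finset.ne_of_mem_erase hx)]
  set G : Bool → (E → Bool) → ℝ := fun b C => wtE C * f (Function.update C e b) with hGdef
  have hG : ∀ (b : Bool) (C : E → Bool) (b' : Bool), G b (Function.update C e b') = G b C := by
    intro b C b'
    simp only [hGdef, hE, Function.update_idem]
  set T : Bool → ℝ := fun b => ∑ C : E → Bool, (if C e = true then G b C else 0) with hT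
  have hTb : ∀ b b' : Bool, ∑ C : E → Bool, (if C e = b' then G b C else 0) = T b := by
    intro b b'
    exact sum_ite_fiber_eq e (hG b) b' true
  have lhs : ∑ C : E → Bool, wt p C * f C = ∑ b : Bool, bw p e b * T b := by
    rw [sum_split e]
    refine Finset.sum_congr rfl fun b _ => ?_
    have : ∀ C : E → Bool, (if C e = b then wt p C * f C else 0)
        = bw p e b * (if C e = b then G b C else 0) := by
      intro C
      by_cases h : C e = b
      · simp only [h, if_pos rfl, hGdef]
        rw [hfac, h]
        have : Function.update C e b = C := by rw [← h, Function.update_eq_self]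
        rw [this]; simp only [if_true]; ring
      · simp [h]
    rw [Finset.sum_congr rfl fun C _ => this C, ← Finset.mul_sum, hTb]
  have rhs : ∀ b : Bool, ∑ C : E → Bool, wt p C * f (Function.update C e b) = T b := by
    intro b
    have step : ∑ C : E → Bool, wt p C * f (Function.update C e b)
        = ∑ b' : Bool, bw p e b' * T b := by
      rw [sum_split e (fun C => wt p C * f (Function.update C e b))]
      refine Finset.sum_congr rfl fun b' _ => ?_
      have : ∀ C : E → Bool, (if C e = b' then wt p C * f (Function.update C e b) else 0)
          = bw p e b' * (if C e = b' then G b C else 0) := by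
        intro C
        by_cases h : C e = b'
        · simp only [h, if_pos rfl, hGdef]
          rw [hfac, h]; simp only [if_true]; ring
        · simp [h]
      rw [Finset.sum_congr rfl fun C _ => this C, ← Finset.mul_sum, hTb]
    rw [step, Fintype.sum_bool, ← add_mul, bw_sum, one_mul]
  rw [lhs]
  exact Finset.sum_congr rfl fun b _ => by rw [rhs b]


/-! ### Tree lemmas -/

/-- Spliced configuration produced by a tree. -/
def Yc (T : PairTree E) (C₁ C₂ : E → Bool) : E → Bool :=
  splice (T.buildS C₁ C₂) C₁ C₂

lemma valid_of_continues {T₂ T₁ : PairTree E} (h : Continues T₂ T₁) :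
    ∀ U : Finset E, T₂.valid U → T₁.valid U := by
  induction h with
  | leaf T => intro U _; trivial
  | node e toS ch₂ ch₁ h ih =>
      intro U hv
      exact ⟨hv.1, fun b₁ b₂ => ih b₁ b₂ _ (hv.2 b₁ b₂)⟩

lemma revealed_notMem_used {T : PairTree E} :
    ∀ U : Finset E, T.valid U → ∀ C₁ C₂ (x : E), x ∈ T.revealed C₁ C₂ → x ∉ U := by
  induction T with
  | leaf => intro U _ C₁ C₂ x hx; simp [PairTree.revealed] at hx
  | node e toS child ih =>
      intro U hv C₁ C₂ x hx
      simp only [PairTree.revealed, Finset.mem_insert] at hx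
      rcases hx with rfl | hx
      · exact hv.1
      · intro hU
        exact ih _ _ _ (hv.2 _ _) C₁ C₂ x hx (Finset.mem_insert_of_mem hU)

lemma buildS_subset_revealed (T : PairTree E) (C₁ C₂ : E → Bool) :
    T.buildS C₁ C₂ ⊆ T.revealed C₁ C₂ := by
  induction T with
  | leaf => simp [PairTree.buildS, PairTree.revealed]
  | node e toS child ih =>
      simp only [PairTree.buildS, PairTree.revealed]
      cases toS
      · simp only [Bool.false_eq_true, if_false]
        exact (ih _ _).trans (Finset.subset_insert _ _)
      · simp only [if_true]
        exact Finset.insert_subset_insert _ (ih _ _)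

lemma update_invariance {T : PairTree E} :
    ∀ U : Finset E, T.valid U → ∀ (e : E), e ∈ U → ∀ (b₁ b₂ : Bool) (C₁ C₂ : E → Bool),
      T.revealed (Function.update C₁ e b₁) (Function.update C₂ e b₂) = T.revealed C₁ C₂ ∧
      T.buildS (Function.update C₁ e b₁) (Function.update C₂ e b₂) = T.buildS C₁ C₂ := by
  induction T with
  | leaf => intro U _ e _ b₁ b₂ C₁ C₂; exact ⟨rfl, rfl⟩
  | node f toS child ih =>
      intro U hv e he b₁ b₂ C₁ C₂
      have hfe : f ≠ e := fun h => hv.1 (h ▸ he)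
      have h1 : Function.update C₁ e b₁ f = C₁ f := Function.update_of_ne hfe _ _
      have h2 : Function.update C₂ e b₂ f = C₂ f := Function.update_of_ne hfe _ _
      have hrec := ih (C₁ f) (C₂ f) (insert f U) (hv.2 _ _) e (Finset.mem_insert_of_mem he)
        b₁ b₂ C₁ C₂
      constructor
      · simp only [PairTree.revealed, h1, h2, hrec.1]
      · simp only [PairTree.buildS, h1, h2, hrec.2]

lemma splice_node {e : E} {toS : Bool} {child : Bool → Bool → PairTree E} {U : Finset E}
    (hv : (PairTree.node e toS child).valid U) (b₁ b₂ : Bool) (C₁ C₂ : E → Bool) :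
    Yc (PairTree.node e toS child) (Function.update C₁ e b₁) (Function.update C₂ e b₂)
      = Function.update (Yc (child b₁ b₂) C₁ C₂) e (if toS then b₁ else b₂) := by
  have heB : e ∉ (child b₁ b₂).buildS C₁ C₂ := fun h =>
    revealed_notMem_used _ (hv.2 b₁ b₂) C₁ C₂ e (buildS_subset_revealed _ _ _ h)
      (Finset.mem_insert_self e U)
  have h1 : Function.update C₁ e b₁ e = b₁ := Function.update_self _ _ _
  have h2 : Function.update C₂ e b₂ e = b₂ := Function.update_self _ _ _
  have hrec := (update_invariance (T := child b₁ b₂) (insert e U) (hv.2 b₁ b₂) e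
    (Finset.mem_insert_self e U) b₁ b₂ C₁ C₂).2
  cases toS
  · -- decision S̄ : the built set is `rest` and the value at `e` is b₂
    have hbuild : (PairTree.node e false child).buildS (Function.update C₁ e b₁)
        (Function.update C₂ e b₂) = (child b₁ b₂).buildS C₁ C₂ := by
      simp only [PairTree.buildS, h1, h2, hrec, Bool.false_eq_true, if_false]
    funext x
    rcases eq_or_ne x e with rfl | hx
    · simp only [Yc, splice, hbuild, Function.update_self, Bool.false_eq_true, if_false,
        if_neg heB, h2]
    · simp only [Yc, splice, hbuild, Function.update_of_ne hx]
  · -- decision S : the built set is `insert e rest` and the value at `e` is b₁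
    have hbuild : (PairTree.node e true child).buildS (Function.update C₁ e b₁)
        (Function.update C₂ e b₂) = insert e ((child b₁ b₂).buildS C₁ C₂) := by
      simp only [PairTree.buildS, h1, h2, hrec, if_true]
    funext x
    rcases eq_or_ne x e with rfl | hx
    · simp only [Yc, splice, hbuild, Function.update_self, if_true,
        if_pos (Finset.mem_insert_self x _), h1]
    · have hmem : (x ∈ insert e ((child b₁ b₂).buildS C₁ C₂))
          = (x ∈ (child b₁ b₂).buildS C₁ C₂) := by
        simp [Finset.mem_insert, hx]
      simp only [Yc, splice, hbuild, hmem, Function.update_of_ne hx]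

lemma revealed_subset_buildS {T₂ T₁ : PairTree E} (hc : Continues T₂ T₁) :
    T₁.allS → ∀ C₁ C₂ : E → Bool, T₁.revealed C₁ C₂ ⊆ T₂.buildS C₁ C₂ := by
  induction hc with
  | leaf T => intro _ C₁ C₂; simp [PairTree.revealed]
  | node e toS ch₂ ch₁ h ih =>
      intro hS C₁ C₂
      obtain ⟨rfl, hS'⟩ := hS
      simp only [PairTree.revealed, PairTree.buildS, if_pos rfl]
      exact Finset.insert_subset_insert _ (ih _ _ (hS' _ _) C₁ C₂)

lemma Yc_mem_A_iff {T₂ T₁ : PairTree E} (hc : Continues T₂ T₁) (hS : T₁.allS)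
    {A : Set (E → Bool)} (hdec : T₁.Decides A) (C₁ C₂ : E → Bool) :
    Yc T₂ C₁ C₂ ∈ A ↔ C₁ ∈ A := by
  refine (hdec C₁ C₂ (Yc T₂ C₁ C₂) ?_).symm
  intro e he
  have : e ∈ T₂.buildS C₁ C₂ := revealed_subset_buildS hc hS C₁ C₂ he
  simp [Yc, splice, this]

/-! ### Pins and indicators -/

open Classical in
/-- Real-valued indicator of an event. -/
noncomputable def ind (A : Set (E → Bool)) (C : E → Bool) : ℝ := if C ∈ A then 1 else 0

lemma ind_of_mem {A : Set (E → Bool)} {C : E → Bool} (h : C ∈ A) : ind A C = 1 := by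
  simp [ind, h]

lemma ind_of_not_mem {A : Set (E → Bool)} {C : E → Bool} (h : C ∉ A) : ind A C = 0 := by
  simp [ind, h]

lemma ind_nonneg (A : Set (E → Bool)) (C : E → Bool) : 0 ≤ ind A C := by
  by_cases h : C ∈ A <;> simp [ind, h]

lemma ind_le_one (A : Set (E → Bool)) (C : E → Bool) : ind A C ≤ 1 := by
  by_cases h : C ∈ A <;> simp [ind, h]

/-- Override a configuration by a partial pinning. -/
def ov (ρ : E → Option Bool) (C : E → Bool) : E → Bool := fun e => (ρ e).getD (C e)

lemma ov_none (C : E → Bool) : ov (fun _ => none) C = C := rfl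

lemma ov_update {ρ : E → Option Bool} {e : E} (hρ : ρ e = none) (C : E → Bool) (b : Bool) :
    ov ρ (Function.update C e b) = ov (Function.update ρ e (some b)) C := by
  funext x
  rcases eq_or_ne x e with rfl | hx
  · simp [ov, hρ, Function.update_self]
  · simp [ov, Function.update_of_ne hx]

lemma dom_update {σ : E → Option Bool} {D : Finset E} {e : E}
    (hσ : ∀ x, (σ x).isSome = true → x ∈ D) (b : Bool) :
    ∀ x, ((Function.update σ e (some b)) x).isSome = true → x ∈ insert e D := by
  intro x hx
  rcases eq_or_ne x e with rfl | h
  · exact Finset.mem_insert_self _ _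
  · rw [Function.update_of_ne h] at hx
    exact Finset.mem_insert_of_mem (hσ x hx)

/-- Monotonicity of the pinned probability of a monotone event, upward case. -/
lemma pin_mono_up {p : E → ℝ} (hp : ∀ e, 0 ≤ p e ∧ p e ≤ 1) {M : Set (E → Bool)}
    (hM : UpwardClosed M) (ρ : E → Option Bool) (e : E) :
    ∑ C : E → Bool, wt p C * ind M (ov (Function.update ρ e (some false)) C)
      ≤ ∑ C : E → Bool, wt p C * ind M (ov (Function.update ρ e (some true)) C) := by
  refine Finset.sum_le_sum fun C _ => mul_le_mul_of_nonneg_left ?_ (wt_nonneg hp C)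
  by_cases h : ov (Function.update ρ e (some false)) C ∈ M
  · have h' : ov (Function.update ρ e (some true)) C ∈ M := by
      refine hM _ _ h fun x hx => ?_
      rcases eq_or_ne x e with rfl | hne
      · simp [ov, Function.update_self] at hx
      · simpa [ov, Function.update_of_ne hne] using hx
    rw [ind_of_mem h, ind_of_mem h']
  · rw [ind_of_not_mem h]
    exact ind_nonneg _ _

/-- Monotonicity of the pinned probability of a monotone event, downward case. -/
lemma pin_mono_down {p : E → ℝ} (hp : ∀ e, 0 ≤ p e ∧ p e ≤ 1) {M : Set (E → Bool)}
    (hM : DownwardClosed M) (ρ : E → Option Bool) (e : E) :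
    ∑ C : E → Bool, wt p C * ind M (ov (Function.update ρ e (some true)) C)
      ≤ ∑ C : E → Bool, wt p C * ind M (ov (Function.update ρ e (some false)) C) := by
  refine Finset.sum_le_sum fun C _ => mul_le_mul_of_nonneg_left ?_ (wt_nonneg hp C)
  by_cases h : ov (Function.update ρ e (some true)) C ∈ M
  · have h' : ov (Function.update ρ e (some false)) C ∈ M := by
      refine hM _ _ h fun x hx => ?_
      rcases eq_or_ne x e with rfl | hne
      · simp [ov, Function.update_self] at hx
      · simpa [ov, Function.update_of_ne hne] using hx
    rw [ind_of_mem h, ind_of_mem h']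
  · rw [ind_of_not_mem h]
    exact ind_nonneg _ _

lemma swap_weight {ι κ : Type*} [Fintype ι] [Fintype κ] (u : ι → ℝ) (w : κ → ℝ)
    (g : ι → κ → ℝ) :
    ∑ i : ι, u i * ∑ k : κ, w k * g i k = ∑ k : κ, w k * ∑ i : ι, u i * g i k := by
  simp only [Finset.mul_sum]
  rw [Finset.sum_comm]
  exact Finset.sum_congr rfl fun k _ => Finset.sum_congr rfl fun i _ => by ring

lemma sum_nonneg_wt {p : E → ℝ} (hp : ∀ e, 0 ≤ p e ∧ p e ≤ 1) (f : (E → Bool) → ℝ)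
    (hf : ∀ C, 0 ≤ f C) : 0 ≤ ∑ C : E → Bool, wt p C * f C :=
  Finset.sum_nonneg fun C _ => mul_nonneg (wt_nonneg hp C) (hf C)

lemma Yc_leaf (C₁ C₂ : E → Bool) : Yc (PairTree.leaf : PairTree E) C₁ C₂ = C₂ := by
  funext x; simp [Yc, PairTree.buildS, splice]

/-! ### The FKG-type inequality along a decision tree -/

lemma K2 {p : E → ℝ} (hp : ∀ e, 0 ≤ p e ∧ p e ≤ 1) {M : Set (E → Bool)}
    (hM : UpwardClosed M ∨ DownwardClosed M) (T : PairTree E) :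
    ∀ (D : Finset E) (σ τ : E → Option Bool),
      T.valid D → (∀ x, (σ x).isSome = true → x ∈ D) → (∀ x, (τ x).isSome = true → x ∈ D) →
      (∑ C : E → Bool, wt p C * ind M (ov σ C)) * (∑ C : E → Bool, wt p C * ind M (ov τ C))
        ≤ ∑ C₁ : E → Bool, wt p C₁ *
            ∑ C₂ : E → Bool, wt p C₂ * (ind M (ov σ C₁) * ind M (ov τ (Yc T C₁ C₂))) := by
  induction T with
  | leaf =>
      intro D σ τ _ _ _
      simp only [Yc_leaf]
      have h1 : ∀ C₁ : E → Bool,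
          ∑ C₂ : E → Bool, wt p C₂ * (ind M (ov σ C₁) * ind M (ov τ C₂))
            = ind M (ov σ C₁) * ∑ C₂ : E → Bool, wt p C₂ * ind M (ov τ C₂) := by
        intro C₁
        rw [Finset.mul_sum]
        exact Finset.sum_congr rfl fun C₂ _ => by ring
      simp only [h1]
      rw [Finset.sum_mul]
      exact le_of_eq (Finset.sum_congr rfl fun C₁ _ => by ring)
  | node e toS child ih =>
      intro D σ τ hv hσ hτ
      obtain ⟨heD, hv'⟩ := hv
      have hσe : σ e = none := by
        cases h : σ e with
        | none => rfl
        | some b => exact absurd (hσ e (by simp [h])) heD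
      have hτe : τ e = none := by
        cases h : τ e with
        | none => rfl
        | some b => exact absurd (hτ e (by simp [h])) heD
      set c : Bool → Bool → Bool := fun b₁ b₂ => if toS then b₁ else b₂ with hc
      set mσ : Bool → ℝ :=
        fun b => ∑ C : E → Bool, wt p C * ind M (ov (Function.update σ e (some b)) C) with hmσd
      set mτ : Bool → ℝ :=
        fun b => ∑ C : E → Bool, wt p C * ind M (ov (Function.update τ e (some b)) C) with hmτd
      set L : Bool → Bool → ℝ := fun b₁ b₂ =>
        ∑ C₁ : E → Bool, wt p C₁ * ∑ C₂ : E → Bool, wt p C₂ *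
          (ind M (ov (Function.update σ e (some b₁)) C₁) *
            ind M (ov (Function.update τ e (some (c b₁ b₂))) (Yc (child b₁ b₂) C₁ C₂))) with hL
      have hmσ : ∑ C : E → Bool, wt p C * ind M (ov σ C) = ∑ b : Bool, bw p e b * mσ b := by
        rw [sum_decomp p e (fun C => ind M (ov σ C))]
        exact Finset.sum_congr rfl fun b _ => by
          rw [hmσd]
          exact congrArg _ (Finset.sum_congr rfl fun C _ => by rw [ov_update hσe])
      have hmτ : ∑ C : E → Bool, wt p C * ind M (ov τ C) = ∑ b : Bool, bw p e b * mτ b := by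
        rw [sum_decomp p e (fun C => ind M (ov τ C))]
        exact Finset.sum_congr rfl fun b _ => by
          rw [hmτd]
          exact congrArg _ (Finset.sum_congr rfl fun C _ => by rw [ov_update hτe])
      have hR : (∑ C₁ : E → Bool, wt p C₁ * ∑ C₂ : E → Bool, wt p C₂ *
            (ind M (ov σ C₁) * ind M (ov τ (Yc (PairTree.node e toS child) C₁ C₂))))
          = ∑ b₁ : Bool, bw p e b₁ * ∑ b₂ : Bool, bw p e b₂ * L b₁ b₂ := by
        rw [sum_decomp p e (fun C₁ => ∑ C₂ : E → Bool, wt p C₂ *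
          (ind M (ov σ C₁) * ind M (ov τ (Yc (PairTree.node e toS child) C₁ C₂))))]
        refine Finset.sum_congr rfl fun b₁ _ => ?_
        congr 1
        have step1 : ∀ C₁ : E → Bool,
            (∑ C₂ : E → Bool, wt p C₂ * (ind M (ov σ (Function.update C₁ e b₁)) *
                ind M (ov τ (Yc (PairTree.node e toS child) (Function.update C₁ e b₁) C₂))))
            = ∑ b₂ : Bool, bw p e b₂ * ∑ C₂ : E → Bool, wt p C₂ *
                (ind M (ov (Function.update σ e (some b₁)) C₁) *
                  ind M (ov (Function.update τ e (some (c b₁ b₂))) (Yc (child b₁ b₂) C₁ C₂))) := by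
          intro C₁
          rw [sum_decomp p e (fun C₂ => ind M (ov σ (Function.update C₁ e b₁)) *
            ind M (ov τ (Yc (PairTree.node e toS child) (Function.update C₁ e b₁) C₂)))]
          refine Finset.sum_congr rfl fun b₂ _ => ?_
          congr 1
          refine Finset.sum_congr rfl fun C₂ _ => ?_
          rw [splice_node ⟨heD, hv'⟩ b₁ b₂ C₁ C₂, ov_update hσe, ov_update hτe]
        simp only [step1]
        rw [swap_weight (wt p) (bw p e)]
      rw [hmσ, hmτ, hR]
      have hIH : ∀ b₁ b₂ : Bool, mσ b₁ * mτ (c b₁ b₂) ≤ L b₁ b₂ := fun b₁ b₂ =>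
        ih b₁ b₂ (insert e D) (Function.update σ e (some b₁))
          (Function.update τ e (some (c b₁ b₂))) (hv' b₁ b₂) (dom_update hσ b₁)
          (dom_update hτ (c b₁ b₂))
      have hw : ∀ b, 0 ≤ bw p e b := bw_nonneg hp e
      have hw1 : bw p e true + bw p e false = 1 := bw_sum p e
      have hm : ∀ b, 0 ≤ mσ b ∧ 0 ≤ mτ b := fun b =>
        ⟨sum_nonneg_wt hp _ fun C => ind_nonneg _ _, sum_nonneg_wt hp _ fun C => ind_nonneg _ _⟩
      simp only [Fintype.sum_bool]
      cases toS
      · -- toS = false : c b₁ b₂ = b₂, factorization, no correlation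
        have h11 := hIH true true
        have h10 := hIH true false
        have h01 := hIH false true
        have h00 := hIH false false
        simp only [hc, if_neg (by simp : ¬(false : Bool) = true)] at h11 h10 h01 h00
        nlinarith [mul_nonneg (hw true) (hw false), mul_nonneg (hw true) (hw true),
          mul_nonneg (hw false) (hw false), (hm true).1, (hm false).1, (hm true).2,
          (hm false).2, mul_le_mul_of_nonneg_left h11 (mul_nonneg (hw true) (hw true)),
          mul_le_mul_of_nonneg_left h10 (mul_nonneg (hw true) (hw false)),
          mul_le_mul_of_nonneg_left h01 (mul_nonneg (hw false) (hw true)),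
          mul_le_mul_of_nonneg_left h00 (mul_nonneg (hw false) (hw false))]
      · -- toS = true : c b₁ b₂ = b₁, Chebyshev correlation step
        have h11 := hIH true true
        have h10 := hIH true false
        have h01 := hIH false true
        have h00 := hIH false false
        simp only [hc, if_true] at h11 h10 h01 h00
        have hmono : 0 ≤ (mσ true - mσ false) * (mτ true - mτ false) := by
          rcases hM with hup | hdown
          · exact mul_nonneg (by linarith [pin_mono_up hp hup σ e])
              (by linarith [pin_mono_up hp hup τ e])
          · have h1 : mσ true - mσ false ≤ 0 := by linarith [pin_mono_down hp hdown σ e]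
            have h2 : mτ true - mτ false ≤ 0 := by linarith [pin_mono_down hp hdown τ e]
            nlinarith [mul_nonneg (neg_nonneg.2 h1) (neg_nonneg.2 h2)]
        have e1 : mσ true * mτ true
            ≤ bw p e true * L true true + bw p e false * L true false := by
          have a := mul_le_mul_of_nonneg_left h11 (hw true)
          have b := mul_le_mul_of_nonneg_left h10 (hw false)
          calc mσ true * mτ true = (bw p e true + bw p e false) * (mσ true * mτ true) := by
                rw [hw1, one_mul]
            _ = bw p e true * (mσ true * mτ true) + bw p e false * (mσ true * mτ true) := by
                ring
            _ ≤ bw p e true * L true true + bw p e false * L true false := add_le_add a b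
        have e0 : mσ false * mτ false
            ≤ bw p e true * L false true + bw p e false * L false false := by
          have a := mul_le_mul_of_nonneg_left h01 (hw true)
          have b := mul_le_mul_of_nonneg_left h00 (hw false)
          calc mσ false * mτ false = (bw p e true + bw p e false) * (mσ false * mτ false) := by
                rw [hw1, one_mul]
            _ = bw p e true * (mσ false * mτ false) + bw p e false * (mσ false * mτ false) := by
                ring
            _ ≤ bw p e true * L false true + bw p e false * L false false := add_le_add a b
        have hbf : bw p e false = 1 - bw p e true := by linarith
        have hbt1 : (0:ℝ) ≤ 1 - bw p e true := by linarith [hw false]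
        have cheb : (bw p e true * mσ true + bw p e false * mσ false) *
              (bw p e true * mτ true + bw p e false * mτ false)
            ≤ bw p e true * (mσ true * mτ true) + bw p e false * (mσ false * mτ false) := by
          rw [hbf]
          nlinarith [mul_nonneg (mul_nonneg (hw true) hbt1) hmono]
        have f1 := mul_le_mul_of_nonneg_left e1 (hw true)
        have f0 := mul_le_mul_of_nonneg_left e0 (hw false)
        linarith

/-! ### The outer induction along `T₁` -/

/-- `T` decides `A` relative to the pinning `ρ`. -/
def DecidesRel (T : PairTree E) (A : Set (E → Bool)) (ρ : E → Option Bool) : Prop :=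
  ∀ C₁ C₂ C₁' : E → Bool, (∀ e ∈ T.revealed C₁ C₂, C₁' e = C₁ e) →
    (ov ρ C₁ ∈ A ↔ ov ρ C₁' ∈ A)

lemma decidesRel_child {e : E} {ch : Bool → Bool → PairTree E} {A : Set (E → Bool)}
    {ρ : E → Option Bool} {D : Finset E} {toS : Bool}
    (hv : (PairTree.node e toS ch).valid D) (hρe : ρ e = none)
    (hdec : DecidesRel (PairTree.node e toS ch) A ρ) (b₁ b₂ : Bool) :
    DecidesRel (ch b₁ b₂) A (Function.update ρ e (some b₁)) := by
  intro C₁ C₂ C₁' hagree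
  have hrev := (update_invariance (T := ch b₁ b₂) (insert e D) (hv.2 b₁ b₂) e
    (Finset.mem_insert_self e D) b₁ b₂ C₁ C₂).1
  have h := hdec (Function.update C₁ e b₁) (Function.update C₂ e b₂)
    (Function.update C₁' e b₁) ?_
  · rwa [ov_update hρe, ov_update hρe] at h
  · intro f hf
    simp only [PairTree.revealed, Function.update_self, hrev, Finset.mem_insert] at hf
    rcases hf with rfl | hf
    · rw [Function.update_self, Function.update_self]
    · have hfe : f ≠ e := fun hh =>
        revealed_notMem_used _ (hv.2 b₁ b₂) C₁ C₂ f hf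
          (hh ▸ Finset.mem_insert_self e D)
      rw [Function.update_of_ne hfe, Function.update_of_ne hfe]
      exact hagree f hf

lemma cs2 {w1 w0 a1 a0 l1 l0 b1 b0 : ℝ} (hw1 : 0 ≤ w1) (hw0 : 0 ≤ w0)
    (ha1 : 0 ≤ a1) (ha0 : 0 ≤ a0) (hl1 : 0 ≤ l1) (hl0 : 0 ≤ l0) (hb1 : 0 ≤ b1)
    (hb0 : 0 ≤ b0) (h1 : b1 ^ 2 ≤ a1 * l1) (h0 : b0 ^ 2 ≤ a0 * l0) :
    (w1 * b1 + w0 * b0) ^ 2 ≤ (w1 * a1 + w0 * a0) * (w1 * l1 + w0 * l0) := by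
  have hprod : (b1 * b0) ^ 2 ≤ (a1 * l0) * (a0 * l1) := by
    nlinarith [mul_le_mul h1 h0 (sq_nonneg b0) (mul_nonneg ha1 hl1)]
  have key : 2 * (b1 * b0) ≤ a1 * l0 + a0 * l1 := by
    nlinarith [sq_nonneg (a1 * l0 - a0 * l1), hprod, mul_nonneg hb1 hb0,
      mul_nonneg ha1 hl0, mul_nonneg ha0 hl1]
  nlinarith [mul_le_mul_of_nonneg_left h1 (mul_nonneg hw1 hw1),
    mul_le_mul_of_nonneg_left h0 (mul_nonneg hw0 hw0),
    mul_le_mul_of_nonneg_left key (mul_nonneg hw1 hw0)]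

lemma OUTER {p : E → ℝ} (hp : ∀ e, 0 ≤ p e ∧ p e ≤ 1) {A M : Set (E → Bool)}
    (hM : UpwardClosed M ∨ DownwardClosed M) {T₂ T₁ : PairTree E}
    (hc : Continues T₂ T₁) :
    ∀ (D : Finset E) (ρ : E → Option Bool), T₁.allS → T₂.valid D →
      (∀ x, (ρ x).isSome = true → x ∈ D) → DecidesRel T₁ A ρ →
      (∑ C : E → Bool, wt p C * (ind A (ov ρ C) * ind M (ov ρ C))) ^ 2
        ≤ (∑ C : E → Bool, wt p C * ind A (ov ρ C)) *
          (∑ C₁ : E → Bool, wt p C₁ * ∑ C₂ : E → Bool, wt p C₂ *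
            (ind A (ov ρ C₁) * (ind M (ov ρ C₁) * ind M (ov ρ (Yc T₂ C₁ C₂))))) := by
  induction hc with
  | leaf T =>
      intro D ρ _ hv hρ hdec
      by_cases hA : ov ρ (fun _ => false) ∈ A
      · have hall : ∀ C, ov ρ C ∈ A := fun C =>
          (hdec (fun _ => false) (fun _ => false) C (by simp [PairTree.revealed])).mp hA
        have h1 : ∀ C, ind A (ov ρ C) = 1 := fun C => ind_of_mem (hall C)
        simp only [h1, one_mul, mul_one]
        rw [sum_wt, one_mul, sq]
        exact K2 hp hM T D ρ ρ hv hρ hρ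
      · have hnone : ∀ C, ov ρ C ∉ A := fun C h =>
          hA ((hdec C C (fun _ => false) (by simp [PairTree.revealed])).mp h)
        have h0 : ∀ C, ind A (ov ρ C) = 0 := fun C => ind_of_not_mem (hnone C)
        simp [h0]
  | node e toS ch₂ ch₁ hck ih =>
      intro D ρ hallS hv hρ hdec
      obtain ⟨htoS, hallS'⟩ := hallS
      subst htoS
      obtain ⟨heD, hv'⟩ := hv
      have hv1 : (PairTree.node e true ch₁).valid D :=
        ⟨heD, fun b₁ b₂ => valid_of_continues (hck b₁ b₂) _ (hv' b₁ b₂)⟩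
      have hρe : ρ e = none := by
        cases h : ρ e with
        | none => rfl
        | some b => exact absurd (hρ e (by simp [h])) heD
      set α : Bool → ℝ :=
        fun b => ∑ C : E → Bool, wt p C * ind A (ov (Function.update ρ e (some b)) C) with hαd
      set β : Bool → ℝ := fun b => ∑ C : E → Bool, wt p C *
        (ind A (ov (Function.update ρ e (some b)) C) *
          ind M (ov (Function.update ρ e (some b)) C)) with hβd
      set L : Bool → Bool → ℝ := fun b₁ b₂ =>
        ∑ C₁ : E → Bool, wt p C₁ * ∑ C₂ : E → Bool, wt p C₂ *
          (ind A (ov (Function.update ρ e (some b₁)) C₁) *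
            (ind M (ov (Function.update ρ e (some b₁)) C₁) *
              ind M (ov (Function.update ρ e (some b₁)) (Yc (ch₂ b₁ b₂) C₁ C₂)))) with hLd
      have hα : ∑ C : E → Bool, wt p C * ind A (ov ρ C) = ∑ b : Bool, bw p e b * α b := by
        rw [sum_decomp p e (fun C => ind A (ov ρ C))]
        exact Finset.sum_congr rfl fun b _ => by
          rw [hαd]
          exact congrArg _ (Finset.sum_congr rfl fun C _ => by rw [ov_update hρe])
      have hβ : ∑ C : E → Bool, wt p C * (ind A (ov ρ C) * ind M (ov ρ C))
          = ∑ b : Bool, bw p e b * β b := by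
        rw [sum_decomp p e (fun C => ind A (ov ρ C) * ind M (ov ρ C))]
        exact Finset.sum_congr rfl fun b _ => by
          rw [hβd]
          exact congrArg _ (Finset.sum_congr rfl fun C _ => by rw [ov_update hρe])
      have hR : (∑ C₁ : E → Bool, wt p C₁ * ∑ C₂ : E → Bool, wt p C₂ *
            (ind A (ov ρ C₁) * (ind M (ov ρ C₁) *
              ind M (ov ρ (Yc (PairTree.node e true ch₂) C₁ C₂)))))
          = ∑ b₁ : Bool, bw p e b₁ * ∑ b₂ : Bool, bw p e b₂ * L b₁ b₂ := by
        rw [sum_decomp p e (fun C₁ => ∑ C₂ : E → Bool, wt p C₂ *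
          (ind A (ov ρ C₁) * (ind M (ov ρ C₁) *
            ind M (ov ρ (Yc (PairTree.node e true ch₂) C₁ C₂)))))]
        refine Finset.sum_congr rfl fun b₁ _ => ?_
        congr 1
        have step1 : ∀ C₁ : E → Bool,
            (∑ C₂ : E → Bool, wt p C₂ * (ind A (ov ρ (Function.update C₁ e b₁)) *
              (ind M (ov ρ (Function.update C₁ e b₁)) *
                ind M (ov ρ (Yc (PairTree.node e true ch₂) (Function.update C₁ e b₁) C₂)))))
            = ∑ b₂ : Bool, bw p e b₂ * ∑ C₂ : E → Bool, wt p C₂ *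
                (ind A (ov (Function.update ρ e (some b₁)) C₁) *
                  (ind M (ov (Function.update ρ e (some b₁)) C₁) *
                    ind M (ov (Function.update ρ e (some b₁)) (Yc (ch₂ b₁ b₂) C₁ C₂)))) := by
          intro C₁
          rw [sum_decomp p e (fun C₂ => ind A (ov ρ (Function.update C₁ e b₁)) *
            (ind M (ov ρ (Function.update C₁ e b₁)) *
              ind M (ov ρ (Yc (PairTree.node e true ch₂) (Function.update C₁ e b₁) C₂))))]
          refine Finset.sum_congr rfl fun b₂ _ => ?_
          congr 1
          refine Finset.sum_congr rfl fun C₂ _ => ?_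
          rw [splice_node ⟨heD, hv'⟩ b₁ b₂ C₁ C₂,
            show (if (true : Bool) = true then b₁ else b₂) = b₁ from rfl,
            ov_update hρe, ov_update hρe]
        simp only [step1]
        rw [swap_weight (wt p) (bw p e)]
      rw [hα, hβ, hR]
      have hIH : ∀ b₁ b₂ : Bool, β b₁ ^ 2 ≤ α b₁ * L b₁ b₂ := fun b₁ b₂ =>
        ih b₁ b₂ (insert e D) (Function.update ρ e (some b₁)) (hallS' b₁ b₂)
          (hv' b₁ b₂) (dom_update hρ b₁) (decidesRel_child hv1 hρe hdec b₁ b₂)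
      have hw : ∀ b, 0 ≤ bw p e b := bw_nonneg hp e
      have hw1 : bw p e true + bw p e false = 1 := bw_sum p e
      have hαn : ∀ b, 0 ≤ α b := fun b => sum_nonneg_wt hp _ fun C => ind_nonneg _ _
      have hβn : ∀ b, 0 ≤ β b := fun b => sum_nonneg_wt hp _ fun C =>
        mul_nonneg (ind_nonneg _ _) (ind_nonneg _ _)
      have hLn : ∀ b₁ b₂, 0 ≤ L b₁ b₂ := fun b₁ b₂ => sum_nonneg_wt hp _ fun C₁ =>
        sum_nonneg_wt hp _ fun C₂ =>
          mul_nonneg (ind_nonneg _ _) (mul_nonneg (ind_nonneg _ _) (ind_nonneg _ _))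
      have hL' : ∀ b : Bool, β b ^ 2 ≤ α b * ∑ b₂ : Bool, bw p e b₂ * L b b₂ := by
        intro b
        have ht := mul_le_mul_of_nonneg_left (hIH b true) (hw true)
        have hf := mul_le_mul_of_nonneg_left (hIH b false) (hw false)
        calc β b ^ 2 = (bw p e true + bw p e false) * β b ^ 2 := by rw [hw1, one_mul]
          _ = bw p e true * β b ^ 2 + bw p e false * β b ^ 2 := by ring
          _ ≤ bw p e true * (α b * L b true) + bw p e false * (α b * L b false) :=
              add_le_add ht hf
          _ = α b * ∑ b₂ : Bool, bw p e b₂ * L b b₂ := by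
              rw [Fintype.sum_bool]; ring
      simp only [Fintype.sum_bool]
      have hLn' : ∀ b, 0 ≤ ∑ b₂ : Bool, bw p e b₂ * L b b₂ := fun b =>
        Finset.sum_nonneg fun b₂ _ => mul_nonneg (hw b₂) (hLn b b₂)
      have := cs2 (hw true) (hw false) (hαn true) (hαn false) (hLn' true) (hLn' false)
        (hβn true) (hβn false) (hL' true) (hL' false)
      simpa [Fintype.sum_bool] using this

/-- Cauchy–Schwarz bound for decision trees. -/
theorem decision_tree_cauchy_schwarz
    {V : Type*} [Fintype V] [DecidableEq V] (G : SimpleGraph V) [DecidableRel G.Adj]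
    (p : G.edgeSet → ℝ) (hp : ∀ e, 0 ≤ p e ∧ p e ≤ 1)
    (T₁ T₂ : PairTree G.edgeSet) (hT₂ : T₂.valid ∅) (hcont : Continues T₂ T₁)
    (hallS : T₁.allS)
    (A M : Set (G.edgeSet → Bool)) (hM : UpwardClosed M ∨ DownwardClosed M)
    (hT₁A : T₁.Decides A) (hT₂B : T₂.Decides (A ∩ M))
    (hApos : 0 < Pr p A) :
    Pr2 p {x | x.1 ∈ A ∩ M ∧ splice (T₂.buildS x.1 x.2) x.1 x.2 ∈ A ∩ M}
      ≥ (Pr p (A ∩ M)) ^ 2 / Pr p A := by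
  have hdecrel : DecidesRel T₁ A (fun _ => none) := by
    intro C₁ C₂ C₁' h
    simpa [ov_none] using hT₁A C₁ C₂ C₁' h
  have h0 := OUTER hp hM hcont ∅ (fun _ => none) hallS hT₂ (by simp) hdecrel
  simp only [ov_none] at h0
  have hPrA : Pr p A = ∑ C : G.edgeSet → Bool, wt p C * ind A C := by
    unfold Pr
    refine Finset.sum_congr rfl fun C _ => ?_
    by_cases h : C ∈ A
    · rw [Set.indicator_of_mem h, ind_of_mem h, mul_one]
    · rw [Set.indicator_of_notMem h, ind_of_not_mem h, mul_zero]
  have hPrB : Pr p (A ∩ M) = ∑ C : G.edgeSet → Bool, wt p C * (ind A C * ind M C) := by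
    unfold Pr
    refine Finset.sum_congr rfl fun C _ => ?_
    by_cases h1 : C ∈ A
    · by_cases h2 : C ∈ M
      · have hm : C ∈ A ∩ M := ⟨h1, h2⟩
        rw [Set.indicator_of_mem hm, ind_of_mem h1, ind_of_mem h2]
        ring
      · rw [Set.indicator_of_notMem (fun hh => h2 hh.2), ind_of_not_mem h2]
        ring
    · rw [Set.indicator_of_notMem (fun hh => h1 hh.1), ind_of_not_mem h1]
      ring
  have hPr2 : Pr2 p {x | x.1 ∈ A ∩ M ∧ splice (T₂.buildS x.1 x.2) x.1 x.2 ∈ A ∩ M}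
      = ∑ C₁ : G.edgeSet → Bool, wt p C₁ * ∑ C₂ : G.edgeSet → Bool, wt p C₂ *
        (ind A C₁ * (ind M C₁ * ind M (Yc T₂ C₁ C₂))) := by
    unfold Pr2
    rw [Fintype.sum_prod_type]
    refine Finset.sum_congr rfl fun C₁ _ => ?_
    rw [Finset.mul_sum]
    refine Finset.sum_congr rfl fun C₂ _ => ?_
    have hYA : Yc T₂ C₁ C₂ ∈ A ↔ C₁ ∈ A := Yc_mem_A_iff hcont hallS hT₁A C₁ C₂
    by_cases hmem : ((C₁, C₂) : _ × _)
        ∈ {x : (G.edgeSet → Bool) × (G.edgeSet → Bool) |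
            x.1 ∈ A ∩ M ∧ splice (T₂.buildS x.1 x.2) x.1 x.2 ∈ A ∩ M}
    · rw [Set.indicator_of_mem hmem]
      obtain ⟨⟨h1, h2⟩, h3, h4⟩ := hmem
      have h4' : Yc T₂ C₁ C₂ ∈ M := h4
      rw [ind_of_mem h1, ind_of_mem h2, ind_of_mem h4']
      ring
    · rw [Set.indicator_of_notMem hmem]
      by_cases h1 : C₁ ∈ A
      · by_cases h2 : C₁ ∈ M
        · have h3 : Yc T₂ C₁ C₂ ∉ M := fun hm => hmem ⟨⟨h1, h2⟩, hYA.mpr h1, hm⟩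
          rw [ind_of_not_mem h3]
          ring
        · rw [ind_of_not_mem h2]
          ring
      · rw [ind_of_not_mem h1]
        ring
  rw [ge_iff_le, div_le_iff₀ hApos, hPr2, hPrA, hPrB, mul_comm]
  exact h0

end DTPerc
end

section
/- (Main Lemma for generating decision trees.) Let E be a finite set, and for each e∈E let (Ω₁(e),μ₁(e)) and (Ω₂(e),μ₂(e)) be finite probability spaces. Let A ⊆ Π_{e∈E}(Ω₁(e) ⊔ Ω₂(e)) be an event such that for every e∈E and every configuration C ∈ Π_{e∈E}(Ω₁(e) ⊔ Ω₂(e)), setting X_i(C,e) := {x∈Ω_i(e) : C⟨e:=x⟩∈A} for i=1,2, one has μ₁(e)(X₁(C,e)) ≤ μ₂(e)(X₂(C,e)). Then for every generating decision tree T with random output configuration C, P(C₁∈A) ≤ P(C∈A) ≤ P(C₂∈A), where C₁ is the random configuration with distribution Π_{e∈E} μ₁(e) and C₂ is the random configuration with distribution Π_{e∈E} μ₂(e). -/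
namespace GenDT

/-- A generating decision tree: every node queries an edge and either samples its value
from the first probability space (`node1`) or the second one (`node2`), with one child
for each possible sampled value. -/
inductive GTree (E : Type u) (Ω₁ : E → Type v) (Ω₂ : E → Type w) : Type (max u v w)
  | leaf : GTree E Ω₁ Ω₂
  | node1 (e : E) (child : Ω₁ e → GTree E Ω₁ Ω₂) : GTree E Ω₁ Ω₂
  | node2 (e : E) (child : Ω₂ e → GTree E Ω₁ Ω₂) : GTree E Ω₁ Ω₂

variable {E : Type*} [Fintype E] [DecidableEq E] {Ω₁ : E → Type*} {Ω₂ : E → Type*}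
  [∀ e, Fintype (Ω₁ e)] [∀ e, Fintype (Ω₂ e)]

/-- Along each root-to-leaf path, every edge of `rem` is queried exactly once. -/
def GTree.complete : GTree E Ω₁ Ω₂ → Finset E → Prop
  | .leaf, rem => rem = ∅
  | .node1 e child, rem => e ∈ rem ∧ ∀ x, (child x).complete (rem.erase e)
  | .node2 e child, rem => e ∈ rem ∧ ∀ x, (child x).complete (rem.erase e)

/-- The probability that the run of the tree outputs exactly the configuration `C`,
when values at `node1`/`node2` nodes are sampled independently with mass functions
`m₁`/`m₂`. -/
def GTree.mass (m₁ : ∀ e, Ω₁ e → ℝ) (m₂ : ∀ e, Ω₂ e → ℝ) :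
    GTree E Ω₁ Ω₂ → (∀ e, Ω₁ e ⊕ Ω₂ e) → ℝ
  | .leaf, _ => 1
  | .node1 e child, C =>
      match C e with
      | .inl x => m₁ e x * (child x).mass m₁ m₂ C
      | .inr _ => 0
  | .node2 e child, C =>
      match C e with
      | .inl _ => 0
      | .inr x => m₂ e x * (child x).mass m₁ m₂ C

/-- Mass function of `C₁`, the configuration sampled entirely from the first spaces. -/
def mass1 (m₁ : ∀ e, Ω₁ e → ℝ) (C : ∀ e, Ω₁ e ⊕ Ω₂ e) : ℝ :=
  ∏ e, match C e with
       | .inl x => m₁ e x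
       | .inr _ => 0

/-- Mass function of `C₂`, the configuration sampled entirely from the second spaces. -/
def mass2 (m₂ : ∀ e, Ω₂ e → ℝ) (C : ∀ e, Ω₁ e ⊕ Ω₂ e) : ℝ :=
  ∏ e, match C e with
       | .inl _ => 0
       | .inr x => m₂ e x

/-- Probability of an event under a mass function on a finite configuration space. -/
noncomputable def PrOf {Ω : Type*} [Fintype Ω] (mass : Ω → ℝ) (A : Set Ω) : ℝ :=
  ∑ x : Ω, A.indicator mass x

/-- An event of configurations in `{0,1}^E` is closed upward if it is preserved by
turning more coordinates to `true`. -/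
def UpwardClosed (A : Set (E → Bool)) : Prop :=
  ∀ C₁ C₂ : E → Bool, C₁ ∈ A → (∀ e, C₁ e = true → C₂ e = true) → C₂ ∈ A

set_option linter.unusedSectionVars false

section Dev

variable (m₁ : ∀ e, Ω₁ e → ℝ) (m₂ : ∀ e, Ω₂ e → ℝ) (A : Set (∀ e, Ω₁ e ⊕ Ω₂ e))

noncomputable def GTree.val :
    GTree E Ω₁ Ω₂ → (∀ e, Ω₁ e ⊕ Ω₂ e) → ℝ
  | .leaf, C => A.indicator 1 C
  | .node1 e child, C =>
      ∑ x : Ω₁ e, m₁ e x * (child x).val (Function.update C e (Sum.inl x))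
  | .node2 e child, C =>
      ∑ y : Ω₂ e, m₂ e y * (child y).val (Function.update C e (Sum.inr y))

def tree1 : List E → GTree E Ω₁ Ω₂
  | [] => .leaf
  | e :: l => .node1 e (fun _ => tree1 l)

def tree2 : List E → GTree E Ω₁ Ω₂
  | [] => .leaf
  | e :: l => .node2 e (fun _ => tree2 l)

lemma toFinset_erase_of_nodup (l : List E) (hl : l.Nodup) (e : E) :
    (l.erase e).toFinset = l.toFinset.erase e := by
  ext a
  simp [List.Nodup.mem_erase_iff hl, Finset.mem_erase]

lemma tree1_complete (l : List E) (hl : l.Nodup) :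
    (tree1 (Ω₁ := Ω₁) (Ω₂ := Ω₂) l).complete l.toFinset := by
  induction l with
  | nil => simp [tree1, GTree.complete]
  | cons e l ih =>
      rcases List.nodup_cons.mp hl with ⟨he, hl'⟩
      refine ⟨by simp, fun x => ?_⟩
      rw [List.toFinset_cons, Finset.erase_insert (by simpa using he)]
      exact ih hl'

lemma tree2_complete (l : List E) (hl : l.Nodup) :
    (tree2 (Ω₁ := Ω₁) (Ω₂ := Ω₂) l).complete l.toFinset := by
  induction l with
  | nil => simp [tree2, GTree.complete]
  | cons e l ih =>
      rcases List.nodup_cons.mp hl with ⟨he, hl'⟩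
      refine ⟨by simp, fun x => ?_⟩
      rw [List.toFinset_cons, Finset.erase_insert (by simpa using he)]
      exact ih hl'

lemma peel1 (e : E) : ∀ (l : List E), e ∈ l → ∀ (C : ∀ e', Ω₁ e' ⊕ Ω₂ e'),
    (tree1 l).val m₁ m₂ A C =
      ∑ x : Ω₁ e, m₁ e x * (tree1 (l.erase e)).val m₁ m₂ A (Function.update C e (Sum.inl x))
  | [], h => by simp at h
  | f :: t, h => by
      intro C
      by_cases hef : f = e
      · subst hef
        simp [List.erase_cons_head, tree1, GTree.val]
      · have het : e ∈ t := by
          rcases List.mem_cons.mp h with h' | h'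
          · exact absurd h'.symm hef
          · exact h'
        rw [List.erase_cons_tail (by simpa using hef)]
        show (∑ z : Ω₁ f, m₁ f z * (tree1 t).val m₁ m₂ A (Function.update C f (Sum.inl z))) = _
        have hfe : f ≠ e := hef
        calc (∑ z : Ω₁ f, m₁ f z * (tree1 t).val m₁ m₂ A (Function.update C f (Sum.inl z)))
            = ∑ z : Ω₁ f, m₁ f z * ∑ x : Ω₁ e, m₁ e x *
                (tree1 (t.erase e)).val m₁ m₂ A
                  (Function.update (Function.update C f (Sum.inl z)) e (Sum.inl x)) := by
              refine Finset.sum_congr rfl fun z _ => ?_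
              rw [peel1 e t het]
          _ = ∑ x : Ω₁ e, m₁ e x * ∑ z : Ω₁ f, m₁ f z *
                (tree1 (t.erase e)).val m₁ m₂ A
                  (Function.update (Function.update C e (Sum.inl x)) f (Sum.inl z)) := by
              simp_rw [Finset.mul_sum]
              rw [Finset.sum_comm]
              refine Finset.sum_congr rfl fun x _ => Finset.sum_congr rfl fun z _ => ?_
              rw [Function.update_comm hfe]
              ring
          _ = _ := rfl

lemma peel2 (e : E) : ∀ (l : List E), e ∈ l → ∀ (C : ∀ e', Ω₁ e' ⊕ Ω₂ e'),
    (tree2 l).val m₁ m₂ A C =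
      ∑ y : Ω₂ e, m₂ e y * (tree2 (l.erase e)).val m₁ m₂ A (Function.update C e (Sum.inr y))
  | [], h => by simp at h
  | f :: t, h => by
      intro C
      by_cases hef : f = e
      · subst hef
        simp [List.erase_cons_head, tree2, GTree.val]
      · have het : e ∈ t := by
          rcases List.mem_cons.mp h with h' | h'
          · exact absurd h'.symm hef
          · exact h'
        rw [List.erase_cons_tail (by simpa using hef)]
        show (∑ z : Ω₂ f, m₂ f z * (tree2 t).val m₁ m₂ A (Function.update C f (Sum.inr z))) = _
        have hfe : f ≠ e := hef
        calc (∑ z : Ω₂ f, m₂ f z * (tree2 t).val m₁ m₂ A (Function.update C f (Sum.inr z)))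
            = ∑ z : Ω₂ f, m₂ f z * ∑ y : Ω₂ e, m₂ e y *
                (tree2 (t.erase e)).val m₁ m₂ A
                  (Function.update (Function.update C f (Sum.inr z)) e (Sum.inr y)) := by
              refine Finset.sum_congr rfl fun z _ => ?_
              rw [peel2 e t het]
          _ = ∑ y : Ω₂ e, m₂ e y * ∑ z : Ω₂ f, m₂ f z *
                (tree2 (t.erase e)).val m₁ m₂ A
                  (Function.update (Function.update C e (Sum.inr y)) f (Sum.inr z)) := by
              simp_rw [Finset.mul_sum]
              rw [Finset.sum_comm]
              refine Finset.sum_congr rfl fun y _ => Finset.sum_congr rfl fun z _ => ?_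
              rw [Function.update_comm hfe]
              ring
          _ = _ := rfl

variable (hm₁0 : ∀ e x, 0 ≤ m₁ e x) (hm₂0 : ∀ e x, 0 ≤ m₂ e x)
  (hcond : ∀ (e : E) (C : ∀ e', Ω₁ e' ⊕ Ω₂ e'),
      (∑ x : Ω₁ e, A.indicator (fun _ => m₁ e x) (Function.update C e (Sum.inl x)))
        ≤ ∑ x : Ω₂ e, A.indicator (fun _ => m₂ e x) (Function.update C e (Sum.inr x)))

lemma indicator_const_apply (c : ℝ) (D : ∀ e, Ω₁ e ⊕ Ω₂ e) :
    A.indicator (fun _ => c) D = c * A.indicator 1 D := by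
  by_cases h : D ∈ A <;> simp [Set.indicator_apply, h]

include hm₁0 hm₂0 hcond in
lemma exchange (e : E) (T : GTree E Ω₁ Ω₂) (rem : Finset E)
    (hT : T.complete rem) (he : e ∉ rem) (C : ∀ e', Ω₁ e' ⊕ Ω₂ e') :
    (∑ x : Ω₁ e, m₁ e x * T.val m₁ m₂ A (Function.update C e (Sum.inl x)))
      ≤ ∑ y : Ω₂ e, m₂ e y * T.val m₁ m₂ A (Function.update C e (Sum.inr y)) := by
  induction T generalizing rem C with
  | leaf =>
      have h := hcond e C
      simp only [indicator_const_apply] at h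
      exact h
  | node1 f child ih =>
      obtain ⟨hf, hch⟩ := hT
      have hfe : f ≠ e := fun h => he (h ▸ hf)
      have he' : e ∉ rem.erase f := fun h => he (Finset.mem_of_mem_erase h)
      show (∑ x : Ω₁ e, m₁ e x * ∑ z : Ω₁ f, m₁ f z *
          (child z).val m₁ m₂ A (Function.update (Function.update C e (Sum.inl x)) f (Sum.inl z)))
        ≤ ∑ y : Ω₂ e, m₂ e y * ∑ z : Ω₁ f, m₁ f z *
          (child z).val m₁ m₂ A (Function.update (Function.update C e (Sum.inr y)) f (Sum.inl z))
      calc (∑ x : Ω₁ e, m₁ e x * ∑ z : Ω₁ f, m₁ f z *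
          (child z).val m₁ m₂ A (Function.update (Function.update C e (Sum.inl x)) f (Sum.inl z)))
          = ∑ z : Ω₁ f, m₁ f z * ∑ x : Ω₁ e, m₁ e x *
            (child z).val m₁ m₂ A (Function.update (Function.update C f (Sum.inl z)) e (Sum.inl x)) := by
            simp_rw [Finset.mul_sum]
            rw [Finset.sum_comm]
            refine Finset.sum_congr rfl fun z _ => Finset.sum_congr rfl fun x _ => ?_
            rw [Function.update_comm hfe]
            ring
        _ ≤ ∑ z : Ω₁ f, m₁ f z * ∑ y : Ω₂ e, m₂ e y *
            (child z).val m₁ m₂ A (Function.update (Function.update C f (Sum.inl z)) e (Sum.inr y)) := by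
            refine Finset.sum_le_sum fun z _ => mul_le_mul_of_nonneg_left ?_ (hm₁0 f z)
            exact ih z (rem.erase f) (hch z) he' _
        _ = _ := by
            simp_rw [Finset.mul_sum]
            rw [Finset.sum_comm]
            refine Finset.sum_congr rfl fun y _ => Finset.sum_congr rfl fun z _ => ?_
            rw [Function.update_comm hfe]
            ring
  | node2 f child ih =>
      obtain ⟨hf, hch⟩ := hT
      have hfe : f ≠ e := fun h => he (h ▸ hf)
      have he' : e ∉ rem.erase f := fun h => he (Finset.mem_of_mem_erase h)
      show (∑ x : Ω₁ e, m₁ e x * ∑ z : Ω₂ f, m₂ f z *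
          (child z).val m₁ m₂ A (Function.update (Function.update C e (Sum.inl x)) f (Sum.inr z)))
        ≤ ∑ y : Ω₂ e, m₂ e y * ∑ z : Ω₂ f, m₂ f z *
          (child z).val m₁ m₂ A (Function.update (Function.update C e (Sum.inr y)) f (Sum.inr z))
      calc (∑ x : Ω₁ e, m₁ e x * ∑ z : Ω₂ f, m₂ f z *
          (child z).val m₁ m₂ A (Function.update (Function.update C e (Sum.inl x)) f (Sum.inr z)))
          = ∑ z : Ω₂ f, m₂ f z * ∑ x : Ω₁ e, m₁ e x *
            (child z).val m₁ m₂ A (Function.update (Function.update C f (Sum.inr z)) e (Sum.inl x)) := by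
            simp_rw [Finset.mul_sum]
            rw [Finset.sum_comm]
            refine Finset.sum_congr rfl fun z _ => Finset.sum_congr rfl fun x _ => ?_
            rw [Function.update_comm hfe]
            ring
        _ ≤ ∑ z : Ω₂ f, m₂ f z * ∑ y : Ω₂ e, m₂ e y *
            (child z).val m₁ m₂ A (Function.update (Function.update C f (Sum.inr z)) e (Sum.inr y)) := by
            refine Finset.sum_le_sum fun z _ => mul_le_mul_of_nonneg_left ?_ (hm₂0 f z)
            exact ih z (rem.erase f) (hch z) he' _
        _ = _ := by
            simp_rw [Finset.mul_sum]
            rw [Finset.sum_comm]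
            refine Finset.sum_congr rfl fun y _ => Finset.sum_congr rfl fun z _ => ?_
            rw [Function.update_comm hfe]
            ring

include hm₁0 hm₂0 hcond in
lemma sandwich (T : GTree E Ω₁ Ω₂) (rem : Finset E) (hT : T.complete rem)
    (l : List E) (hl : l.Nodup) (hlf : l.toFinset = rem) (C : ∀ e', Ω₁ e' ⊕ Ω₂ e') :
    (tree1 l).val m₁ m₂ A C ≤ T.val m₁ m₂ A C ∧
      T.val m₁ m₂ A C ≤ (tree2 l).val m₁ m₂ A C := by
  induction T generalizing rem l C with
  | leaf =>
      have : l = [] := by rw [← List.toFinset_eq_empty_iff, hlf]; exact hT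
      subst this
      exact ⟨le_refl _, le_refl _⟩
  | node1 e child ih =>
      obtain ⟨he, hch⟩ := hT
      have hel : e ∈ l := by rw [← List.mem_toFinset, hlf]; exact he
      have hln : (l.erase e).Nodup := hl.erase e
      have hlf' : (l.erase e).toFinset = rem.erase e := by
        rw [toFinset_erase_of_nodup l hl, hlf]
      have hee : e ∉ (l.erase e).toFinset := by
        rw [hlf']; exact Finset.notMem_erase e rem
      constructor
      · rw [peel1 m₁ m₂ A e l hel C]
        refine Finset.sum_le_sum fun x _ => mul_le_mul_of_nonneg_left ?_ (hm₁0 e x)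
        exact (ih x (rem.erase e) (hch x) (l.erase e) hln hlf' _).1
      · calc (GTree.node1 e child).val m₁ m₂ A C
            ≤ ∑ x : Ω₁ e, m₁ e x *
                (tree2 (l.erase e)).val m₁ m₂ A (Function.update C e (Sum.inl x)) := by
              refine Finset.sum_le_sum fun x _ => mul_le_mul_of_nonneg_left ?_ (hm₁0 e x)
              exact (ih x (rem.erase e) (hch x) (l.erase e) hln hlf' _).2
          _ ≤ ∑ y : Ω₂ e, m₂ e y *
                (tree2 (l.erase e)).val m₁ m₂ A (Function.update C e (Sum.inr y)) :=
              exchange m₁ m₂ A hm₁0 hm₂0 hcond e _ _ (tree2_complete _ hln) hee C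
          _ = (tree2 l).val m₁ m₂ A C := (peel2 m₁ m₂ A e l hel C).symm
  | node2 e child ih =>
      obtain ⟨he, hch⟩ := hT
      have hel : e ∈ l := by rw [← List.mem_toFinset, hlf]; exact he
      have hln : (l.erase e).Nodup := hl.erase e
      have hlf' : (l.erase e).toFinset = rem.erase e := by
        rw [toFinset_erase_of_nodup l hl, hlf]
      have hee : e ∉ (l.erase e).toFinset := by
        rw [hlf']; exact Finset.notMem_erase e rem
      constructor
      · calc (tree1 l).val m₁ m₂ A C
            = ∑ x : Ω₁ e, m₁ e x *
                (tree1 (l.erase e)).val m₁ m₂ A (Function.update C e (Sum.inl x)) :=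
              peel1 m₁ m₂ A e l hel C
          _ ≤ ∑ y : Ω₂ e, m₂ e y *
                (tree1 (l.erase e)).val m₁ m₂ A (Function.update C e (Sum.inr y)) :=
              exchange m₁ m₂ A hm₁0 hm₂0 hcond e _ _ (tree1_complete _ hln) hee C
          _ ≤ (GTree.node2 e child).val m₁ m₂ A C := by
              refine Finset.sum_le_sum fun y _ => mul_le_mul_of_nonneg_left ?_ (hm₂0 e y)
              exact (ih y (rem.erase e) (hch y) (l.erase e) hln hlf' _).1
      · rw [peel2 m₁ m₂ A e l hel C]
        refine Finset.sum_le_sum fun y _ => mul_le_mul_of_nonneg_left ?_ (hm₂0 e y)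
        exact (ih y (rem.erase e) (hch y) (l.erase e) hln hlf' _).2

open Classical in
lemma sum_eq_val (T : GTree E Ω₁ Ω₂) (rem : Finset E) (hT : T.complete rem)
    (C₀ : ∀ e', Ω₁ e' ⊕ Ω₂ e') :
    (∑ C : ∀ e', Ω₁ e' ⊕ Ω₂ e',
      if ∀ e' ∉ rem, C e' = C₀ e' then A.indicator (T.mass m₁ m₂) C else 0)
      = T.val m₁ m₂ A C₀ := by
  induction T generalizing rem C₀ with
  | leaf =>
      subst hT
      have hiff : ∀ C : ∀ e', Ω₁ e' ⊕ Ω₂ e',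
          (∀ e' ∉ (∅ : Finset E), C e' = C₀ e') ↔ C = C₀ := by
        intro C; simp [funext_iff]
      calc (∑ C : ∀ e', Ω₁ e' ⊕ Ω₂ e',
              if ∀ e' ∉ (∅ : Finset E), C e' = C₀ e' then
                A.indicator (GTree.mass m₁ m₂ .leaf) C else 0)
          = ∑ C : ∀ e', Ω₁ e' ⊕ Ω₂ e',
              if C = C₀ then A.indicator (GTree.mass m₁ m₂ .leaf) C else 0 := by
            refine Finset.sum_congr rfl fun C _ => if_congr (hiff C) rfl rfl
        _ = A.indicator (GTree.mass m₁ m₂ .leaf) C₀ := by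
            rw [Finset.sum_ite_eq' Finset.univ C₀]
            simp
        _ = GTree.val m₁ m₂ A .leaf C₀ := by
            show _ = A.indicator 1 C₀
            by_cases hA : C₀ ∈ A <;>
              simp [Set.indicator_apply, hA, GTree.mass]
  | node1 e child ih =>
      obtain ⟨he, hch⟩ := hT
      have key1 : ∀ (x : Ω₁ e) (C : ∀ e', Ω₁ e' ⊕ Ω₂ e'),
          (if C e = Sum.inl x then
            (if ∀ e' ∉ rem, C e' = C₀ e' then
              A.indicator (GTree.mass m₁ m₂ (.node1 e child)) C else 0) else 0)
          = m₁ e x * (if ∀ e' ∉ rem.erase e, C e' = Function.update C₀ e (Sum.inl x) e' then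
              A.indicator ((child x).mass m₁ m₂) C else 0) := by
        intro x C
        by_cases h1 : C e = Sum.inl x
        · by_cases h2 : ∀ e' ∉ rem, C e' = C₀ e'
          · have h3 : ∀ e' ∉ rem.erase e, C e' = Function.update C₀ e (Sum.inl x) e' := by
              intro e' he'
              by_cases hee : e' = e
              · subst hee; rw [Function.update_self]; exact h1
              · rw [Function.update_of_ne hee]
                refine h2 e' fun hmem => he' (Finset.mem_erase.mpr ⟨hee, hmem⟩)
            rw [if_pos h1, if_pos h2, if_pos h3]
            by_cases hA : C ∈ A
            · rw [Set.indicator_of_mem hA, Set.indicator_of_mem hA]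
              show GTree.mass m₁ m₂ (.node1 e child) C = _
              rw [GTree.mass, h1]
            · rw [Set.indicator_of_notMem hA, Set.indicator_of_notMem hA, mul_zero]
          · have h3 : ¬ ∀ e' ∉ rem.erase e, C e' = Function.update C₀ e (Sum.inl x) e' := by
              intro h3
              refine h2 fun e' he' => ?_
              have hee : e' ≠ e := fun h => he' (h ▸ he)
              have := h3 e' fun hmem => he' (Finset.mem_of_mem_erase hmem)
              rwa [Function.update_of_ne hee] at this
            rw [if_pos h1, if_neg h2, if_neg h3, mul_zero]
        · have h3 : ¬ ∀ e' ∉ rem.erase e, C e' = Function.update C₀ e (Sum.inl x) e' := by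
            intro h3
            have := h3 e (Finset.notMem_erase e rem)
            rw [Function.update_self] at this
            exact h1 this
          rw [if_neg h1, if_neg h3, mul_zero]
      have key2 : ∀ (y : Ω₂ e) (C : ∀ e', Ω₁ e' ⊕ Ω₂ e'),
          (if C e = Sum.inr y then
            (if ∀ e' ∉ rem, C e' = C₀ e' then
              A.indicator (GTree.mass m₁ m₂ (.node1 e child)) C else 0) else 0) = 0 := by
        intro y C
        by_cases h1 : C e = Sum.inr y
        · rw [if_pos h1]
          have hz : A.indicator (GTree.mass m₁ m₂ (.node1 e child)) C = 0 := by
            by_cases hA : C ∈ A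
            · rw [Set.indicator_of_mem hA]
              show GTree.mass m₁ m₂ (.node1 e child) C = 0
              rw [GTree.mass, h1]
            · exact Set.indicator_of_notMem hA _
          rw [hz]; simp
        · rw [if_neg h1]
      calc (∑ C : ∀ e', Ω₁ e' ⊕ Ω₂ e',
              if ∀ e' ∉ rem, C e' = C₀ e' then
                A.indicator (GTree.mass m₁ m₂ (.node1 e child)) C else 0)
          = ∑ C : ∀ e', Ω₁ e' ⊕ Ω₂ e', ∑ v : Ω₁ e ⊕ Ω₂ e,
              if C e = v then
                (if ∀ e' ∉ rem, C e' = C₀ e' then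
                  A.indicator (GTree.mass m₁ m₂ (.node1 e child)) C else 0) else 0 := by
            refine Finset.sum_congr rfl fun C _ => ?_
            rw [Finset.sum_ite_eq Finset.univ (C e)]
            simp
        _ = ∑ v : Ω₁ e ⊕ Ω₂ e, ∑ C : ∀ e', Ω₁ e' ⊕ Ω₂ e',
              if C e = v then
                (if ∀ e' ∉ rem, C e' = C₀ e' then
                  A.indicator (GTree.mass m₁ m₂ (.node1 e child)) C else 0) else 0 :=
            Finset.sum_comm
        _ = GTree.val m₁ m₂ A (.node1 e child) C₀ := by
            rw [Fintype.sum_sum_type]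
            have hr : ∀ y : Ω₂ e, (∑ C : ∀ e', Ω₁ e' ⊕ Ω₂ e',
                if C e = Sum.inr y then
                  (if ∀ e' ∉ rem, C e' = C₀ e' then
                    A.indicator (GTree.mass m₁ m₂ (.node1 e child)) C else 0) else 0) = 0 := by
              intro y
              exact Finset.sum_eq_zero fun C _ => key2 y C
            simp only [hr, Finset.sum_const_zero, add_zero]
            show _ = ∑ x : Ω₁ e, m₁ e x * (child x).val m₁ m₂ A (Function.update C₀ e (Sum.inl x))
            refine Finset.sum_congr rfl fun x _ => ?_
            simp only [key1]
            rw [← Finset.mul_sum, ih x (rem.erase e) (hch x) (Function.update C₀ e (Sum.inl x))]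
  | node2 e child ih =>
      obtain ⟨he, hch⟩ := hT
      have key1 : ∀ (y : Ω₂ e) (C : ∀ e', Ω₁ e' ⊕ Ω₂ e'),
          (if C e = Sum.inr y then
            (if ∀ e' ∉ rem, C e' = C₀ e' then
              A.indicator (GTree.mass m₁ m₂ (.node2 e child)) C else 0) else 0)
          = m₂ e y * (if ∀ e' ∉ rem.erase e, C e' = Function.update C₀ e (Sum.inr y) e' then
              A.indicator ((child y).mass m₁ m₂) C else 0) := by
        intro y C
        by_cases h1 : C e = Sum.inr y
        · by_cases h2 : ∀ e' ∉ rem, C e' = C₀ e'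
          · have h3 : ∀ e' ∉ rem.erase e, C e' = Function.update C₀ e (Sum.inr y) e' := by
              intro e' he'
              by_cases hee : e' = e
              · subst hee; rw [Function.update_self]; exact h1
              · rw [Function.update_of_ne hee]
                refine h2 e' fun hmem => he' (Finset.mem_erase.mpr ⟨hee, hmem⟩)
            rw [if_pos h1, if_pos h2, if_pos h3]
            by_cases hA : C ∈ A
            · rw [Set.indicator_of_mem hA, Set.indicator_of_mem hA]
              show GTree.mass m₁ m₂ (.node2 e child) C = _
              rw [GTree.mass, h1]
            · rw [Set.indicator_of_notMem hA, Set.indicator_of_notMem hA, mul_zero]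
          · have h3 : ¬ ∀ e' ∉ rem.erase e, C e' = Function.update C₀ e (Sum.inr y) e' := by
              intro h3
              refine h2 fun e' he' => ?_
              have hee : e' ≠ e := fun h => he' (h ▸ he)
              have := h3 e' fun hmem => he' (Finset.mem_of_mem_erase hmem)
              rwa [Function.update_of_ne hee] at this
            rw [if_pos h1, if_neg h2, if_neg h3, mul_zero]
        · have h3 : ¬ ∀ e' ∉ rem.erase e, C e' = Function.update C₀ e (Sum.inr y) e' := by
            intro h3
            have := h3 e (Finset.notMem_erase e rem)
            rw [Function.update_self] at this
            exact h1 this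
          rw [if_neg h1, if_neg h3, mul_zero]
      have key2 : ∀ (x : Ω₁ e) (C : ∀ e', Ω₁ e' ⊕ Ω₂ e'),
          (if C e = Sum.inl x then
            (if ∀ e' ∉ rem, C e' = C₀ e' then
              A.indicator (GTree.mass m₁ m₂ (.node2 e child)) C else 0) else 0) = 0 := by
        intro x C
        by_cases h1 : C e = Sum.inl x
        · rw [if_pos h1]
          have hz : A.indicator (GTree.mass m₁ m₂ (.node2 e child)) C = 0 := by
            by_cases hA : C ∈ A
            · rw [Set.indicator_of_mem hA]
              show GTree.mass m₁ m₂ (.node2 e child) C = 0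
              rw [GTree.mass, h1]
            · exact Set.indicator_of_notMem hA _
          rw [hz]; simp
        · rw [if_neg h1]
      calc (∑ C : ∀ e', Ω₁ e' ⊕ Ω₂ e',
              if ∀ e' ∉ rem, C e' = C₀ e' then
                A.indicator (GTree.mass m₁ m₂ (.node2 e child)) C else 0)
          = ∑ C : ∀ e', Ω₁ e' ⊕ Ω₂ e', ∑ v : Ω₁ e ⊕ Ω₂ e,
              if C e = v then
                (if ∀ e' ∉ rem, C e' = C₀ e' then
                  A.indicator (GTree.mass m₁ m₂ (.node2 e child)) C else 0) else 0 := by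
            refine Finset.sum_congr rfl fun C _ => ?_
            rw [Finset.sum_ite_eq Finset.univ (C e)]
            simp
        _ = ∑ v : Ω₁ e ⊕ Ω₂ e, ∑ C : ∀ e', Ω₁ e' ⊕ Ω₂ e',
              if C e = v then
                (if ∀ e' ∉ rem, C e' = C₀ e' then
                  A.indicator (GTree.mass m₁ m₂ (.node2 e child)) C else 0) else 0 :=
            Finset.sum_comm
        _ = GTree.val m₁ m₂ A (.node2 e child) C₀ := by
            rw [Fintype.sum_sum_type]
            have hr : ∀ x : Ω₁ e, (∑ C : ∀ e', Ω₁ e' ⊕ Ω₂ e',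
                if C e = Sum.inl x then
                  (if ∀ e' ∉ rem, C e' = C₀ e' then
                    A.indicator (GTree.mass m₁ m₂ (.node2 e child)) C else 0) else 0) = 0 := by
              intro x
              exact Finset.sum_eq_zero fun C _ => key2 x C
            simp only [hr, Finset.sum_const_zero, zero_add]
            show _ = ∑ y : Ω₂ e, m₂ e y * (child y).val m₁ m₂ A (Function.update C₀ e (Sum.inr y))
            refine Finset.sum_congr rfl fun y _ => ?_
            simp only [key1]
            rw [← Finset.mul_sum, ih y (rem.erase e) (hch y) (Function.update C₀ e (Sum.inr y))]


lemma tree1_mass (l : List E) (C : ∀ e, Ω₁ e ⊕ Ω₂ e) :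
    (tree1 l).mass m₁ m₂ C
      = (l.map fun e => match C e with | .inl x => m₁ e x | .inr _ => 0).prod := by
  induction l with
  | nil => simp [tree1, GTree.mass]
  | cons e l ih =>
      show GTree.mass m₁ m₂ (.node1 e fun _ => tree1 l) C = _
      rw [GTree.mass]
      cases hC : C e <;> simp [hC, ih]

lemma tree2_mass (l : List E) (C : ∀ e, Ω₁ e ⊕ Ω₂ e) :
    (tree2 l).mass m₁ m₂ C
      = (l.map fun e => match C e with | .inl _ => 0 | .inr y => m₂ e y).prod := by
  induction l with
  | nil => simp [tree2, GTree.mass]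
  | cons e l ih =>
      show GTree.mass m₁ m₂ (.node2 e fun _ => tree2 l) C = _
      rw [GTree.mass]
      cases hC : C e <;> simp [hC, ih]

lemma mass1_eq (l : List E)
    (hl : l.Nodup) (hu : l.toFinset = Finset.univ) (C : ∀ e, Ω₁ e ⊕ Ω₂ e) :
    mass1 (Ω₂ := Ω₂) m₁ C = (tree1 l).mass m₁ m₂ C := by
  rw [tree1_mass, ← List.prod_toFinset _ hl, hu, mass1]

lemma mass2_eq (l : List E)
    (hl : l.Nodup) (hu : l.toFinset = Finset.univ) (C : ∀ e, Ω₁ e ⊕ Ω₂ e) :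
    mass2 (Ω₁ := Ω₁) m₂ C = (tree2 l).mass m₁ m₂ C := by
  rw [tree2_mass, ← List.prod_toFinset _ hl, hu, mass2]

end Dev


/-- Main Lemma for generating decision trees: if for every edge `e` and every
configuration `C` the measure of `X₁(C,e) = {x ∈ Ω₁(e) : C⟨e:=x⟩ ∈ A}` under `μ₁(e)`
is at most the measure of `X₂(C,e)` under `μ₂(e)`, then
`P(C₁ ∈ A) ≤ P(C ∈ A) ≤ P(C₂ ∈ A)`. -/
theorem main_lemma
    (m₁ : ∀ e, Ω₁ e → ℝ) (m₂ : ∀ e, Ω₂ e → ℝ)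
    (hm₁0 : ∀ e x, 0 ≤ m₁ e x) (hm₂0 : ∀ e x, 0 ≤ m₂ e x)
    (hm₁1 : ∀ e, ∑ x : Ω₁ e, m₁ e x = 1) (hm₂1 : ∀ e, ∑ x : Ω₂ e, m₂ e x = 1)
    (A : Set (∀ e, Ω₁ e ⊕ Ω₂ e))
    (hcond : ∀ (e : E) (C : ∀ e', Ω₁ e' ⊕ Ω₂ e'),
      (∑ x : Ω₁ e, A.indicator (fun _ => m₁ e x) (Function.update C e (Sum.inl x)))
        ≤ ∑ x : Ω₂ e, A.indicator (fun _ => m₂ e x) (Function.update C e (Sum.inr x)))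
    (T : GTree E Ω₁ Ω₂) (hT : T.complete Finset.univ) :
    PrOf (mass1 m₁) A ≤ PrOf (T.mass m₁ m₂) A ∧
      PrOf (T.mass m₁ m₂) A ≤ PrOf (mass2 m₂) A := by
  classical
  have hne : ∀ e, Nonempty (Ω₁ e) := by
    intro e
    by_contra h
    rw [not_nonempty_iff] at h
    have h1 := hm₁1 e
    rw [Finset.univ_eq_empty, Finset.sum_empty] at h1
    exact zero_ne_one h1
  have C₀ : ∀ e, Ω₁ e ⊕ Ω₂ e := fun e => Sum.inl (hne e).some
  set l : List E := Finset.univ.toList with hldef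
  have hl : l.Nodup := Finset.nodup_toList _
  have hu : l.toFinset = Finset.univ := Finset.toList_toFinset _
  have hPr : ∀ T' : GTree E Ω₁ Ω₂, T'.complete Finset.univ →
      PrOf (T'.mass m₁ m₂) A = T'.val m₁ m₂ A C₀ := by
    intro T' h
    rw [PrOf, ← sum_eq_val m₁ m₂ A T' Finset.univ h C₀]
    refine Finset.sum_congr rfl fun C _ => ?_
    rw [if_pos]
    · intro e' he'
      exact absurd (Finset.mem_univ e') he'
  have h1c : (tree1 (Ω₁ := Ω₁) (Ω₂ := Ω₂) l).complete Finset.univ := by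
    rw [← hu]; exact tree1_complete l hl
  have h2c : (tree2 (Ω₁ := Ω₁) (Ω₂ := Ω₂) l).complete Finset.univ := by
    rw [← hu]; exact tree2_complete l hl
  have hm1 : mass1 (Ω₂ := Ω₂) m₁ = (tree1 l).mass m₁ m₂ :=
    funext fun C => mass1_eq m₁ m₂ l hl hu C
  have hm2 : mass2 (Ω₁ := Ω₁) m₂ = (tree2 l).mass m₁ m₂ :=
    funext fun C => mass2_eq m₁ m₂ l hl hu C
  have hs := sandwich m₁ m₂ A hm₁0 hm₂0 hcond T Finset.univ hT l hl hu C₀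
  constructor
  · rw [hm1, hPr _ h1c, hPr _ hT]
    exact hs.1
  · rw [hm2, hPr _ h2c, hPr _ hT]
    exact hs.2

end GenDT
end

section
/- (Pairwise part of the decision tree colored-percolation theorem.) Let E be a finite set. In the generalized decision-tree model, take Ω₁(e)={(x,y,z)∈{0,1}³ : x⊕y⊕z=0}={000,011,101,110} with μ₁(e) uniform (probability 1/4 each), and Ω₂(e)={0,1}³ with μ₂(e) uniform (probability 1/8 each). For events U,V ⊆ {0,1}^E that are closed upward, let U×V denote the event that the configuration of first coordinates (e ↦ first bit of C(e)) lies in U and the configuration of second coordinates lies in V. Then for every generating decision tree T with random output configuration C, P(C₁∈U×V) = P(C∈U×V) = P(C₂∈U×V), where C₁ has distribution Π_e μ₁(e) and C₂ has distribution Π_e μ₂(e). -/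
namespace GenDT

variable {E : Type*} [Fintype E] [DecidableEq E] {Ω₁ : E → Type*} {Ω₂ : E → Type*}
  [∀ e, Fintype (Ω₁ e)] [∀ e, Fintype (Ω₂ e)]

/-- Triples of bits. -/
abbrev B3 : Type := Bool × Bool × Bool

/-- Triples of bits with xor equal to `0`: `{000, 011, 101, 110}`. -/
abbrev XorZero : Type := {x : B3 // xor x.1 (xor x.2.1 x.2.2) = false}

/-- The triple of bits carried by a value of `Ω₁(e) ⊔ Ω₂(e)`. -/
def bits : XorZero ⊕ B3 → B3
  | .inl x => x.1
  | .inr x => x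

/-- `μ₁(e)`: uniform on the four xor-zero triples. -/
noncomputable def massXor : (e : E) → XorZero → ℝ := fun _ _ => 1 / 4

/-- `μ₂(e)`: uniform on all eight triples. -/
noncomputable def massAll : (e : E) → B3 → ℝ := fun _ _ => 1 / 8

/-- The event `U × V`: the configuration of first coordinates lies in `U` and the
configuration of second coordinates lies in `V`. -/
def CoordEvent₂ (U V : Set (E → Bool)) : Set (E → XorZero ⊕ B3) :=
  {C | (fun e => (bits (C e)).1) ∈ U ∧ (fun e => (bits (C e)).2.1) ∈ V}

/-! ### Auxiliary material for the proof -/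

/-- First two bits of a xor-zero triple. -/
def pr (y : XorZero) : Bool × Bool := (y.1.1, y.1.2.1)

/-- First two bits carried by a value. -/
def pairOf (x : XorZero ⊕ B3) : Bool × Bool := ((bits x).1, (bits x).2.1)

@[simp] lemma pairOf_inl (y : XorZero) : pairOf (.inl y) = pr y := rfl
@[simp] lemma pairOf_inr (z : B3) : pairOf (.inr z) = (z.1, z.2.1) := rfl

/-- The configuration of pairs of first two bits. -/
def pairsOf (C : ∀ _ : E, XorZero ⊕ B3) : E → Bool × Bool := fun e => pairOf (C e)

/-- `XorZero` is determined by its first two bits. -/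
def XorZero.equivPair : XorZero ≃ Bool × Bool where
  toFun := pr
  invFun p := ⟨(p.1, p.2, xor p.1 p.2), by obtain ⟨a, b⟩ := p; cases a <;> cases b <;> rfl⟩
  left_inv := by decide
  right_inv := by decide

lemma sum_xorZero (h : Bool × Bool → ℝ) :
    ∑ y : XorZero, h (pr y) = ∑ p : Bool × Bool, h p :=
  XorZero.equivPair.sum_comp h

lemma sum_b3 (h : Bool × Bool → ℝ) :
    ∑ z : B3, h (z.1, z.2.1) = 2 * ∑ p : Bool × Bool, h p := by
  simp [Fintype.sum_prod_type]; ring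

lemma sum_om (h : Bool × Bool → ℝ) :
    ∑ x : XorZero ⊕ B3, h (pairOf x) = 3 * ∑ p : Bool × Bool, h p := by
  rw [Fintype.sum_sum_type]
  simp only [pairOf_inl, pairOf_inr]
  rw [sum_xorZero, sum_b3]; ring

lemma card_om : Fintype.card (XorZero ⊕ B3) = 12 := by decide

/-- Recombine a value at coordinate `e` with the rest of a configuration. -/
def recomb (e : E) (x : XorZero ⊕ B3) (D : {j : E // j ≠ e} → XorZero ⊕ B3) :
    ∀ _ : E, XorZero ⊕ B3 :=
  (Equiv.funSplitAt e (XorZero ⊕ B3)).symm (x, D)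

@[simp] lemma recomb_same (e : E) (x : XorZero ⊕ B3) (D : {j : E // j ≠ e} → XorZero ⊕ B3) :
    recomb e x D e = x := by
  simp [recomb, Equiv.funSplitAt, Equiv.piSplitAt]

lemma recomb_ne (e : E) (x : XorZero ⊕ B3) (D : {j : E // j ≠ e} → XorZero ⊕ B3)
    {j : E} (h : j ≠ e) : recomb e x D j = D ⟨j, h⟩ := by
  simp [recomb, Equiv.funSplitAt, Equiv.piSplitAt, h]

lemma sum_split (e : E) (f : (∀ _ : E, XorZero ⊕ B3) → ℝ) :
    ∑ C : ∀ _ : E, XorZero ⊕ B3, f C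
      = ∑ x : XorZero ⊕ B3, ∑ D : {j : E // j ≠ e} → XorZero ⊕ B3, f (recomb e x D) := by
  rw [← Equiv.sum_comp (Equiv.funSplitAt e (XorZero ⊕ B3)).symm f, Fintype.sum_prod_type]
  rfl

lemma update_recomb (e : E) (x x' : XorZero ⊕ B3) (D : {j : E // j ≠ e} → XorZero ⊕ B3)
    (p : Bool × Bool) :
    Function.update (pairsOf (recomb e x D)) e p
      = Function.update (pairsOf (recomb e x' D)) e p := by
  funext j
  by_cases h : j = e
  · subst h; simp
  · simp [Function.update, h, pairsOf, recomb_ne e _ _ h]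

lemma pairsOf_recomb (e : E) (x : XorZero ⊕ B3) (D : {j : E // j ≠ e} → XorZero ⊕ B3) :
    pairsOf (recomb e x D) = Function.update (pairsOf (recomb e x D)) e (pairOf x) := by
  have : pairsOf (recomb e x D) e = pairOf x := by simp [pairsOf]
  conv_lhs => rw [← Function.update_eq_self e (pairsOf (recomb e x D))]
  rw [this]

/-- The mass of a tree complete on `s` depends only on coordinates in `s`. -/
lemma mass_congr (m₁ : ∀ e, Ω₁ e → ℝ) (m₂ : ∀ e, Ω₂ e → ℝ) :
    ∀ (T : GTree E Ω₁ Ω₂) (s : Finset E), T.complete s →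
      ∀ C C' : ∀ e, Ω₁ e ⊕ Ω₂ e, (∀ j ∈ s, C j = C' j) →
        T.mass m₁ m₂ C = T.mass m₁ m₂ C'
  | .leaf, _, _, _, _, _ => rfl
  | .node1 e ch, s, hs, C, C', h => by
      have he : C' e = C e := (h e hs.1).symm
      simp only [GTree.mass, he]
      cases hx : C e with
      | inl x =>
          exact congrArg (m₁ e x * ·) (mass_congr m₁ m₂ (ch x) _ (hs.2 x) C C'
            fun j hj => h j (Finset.mem_of_mem_erase hj))
      | inr x => rfl
  | .node2 e ch, s, hs, C, C', h => by
      have he : C' e = C e := (h e hs.1).symm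
      simp only [GTree.mass, he]
      cases hx : C e with
      | inl x => rfl
      | inr x =>
          exact congrArg (m₂ e x * ·) (mass_congr m₁ m₂ (ch x) _ (hs.2 x) C C'
            fun j hj => h j (Finset.mem_of_mem_erase hj))

/-- Resampling the pair at a single coordinate uniformly does not change expectations. -/
lemma sum_pairs_resample (e : E) (g : (E → Bool × Bool) → ℝ) :
    ∑ C : ∀ _ : E, XorZero ⊕ B3, g (pairsOf C)
      = (1 / 4 : ℝ) * ∑ p : Bool × Bool, ∑ C : ∀ _ : E, XorZero ⊕ B3,
          g (Function.update (pairsOf C) e p) := by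
  classical
  set x₀ : XorZero ⊕ B3 := Sum.inr (false, false, false) with hx₀
  have lhs : ∑ C : ∀ _ : E, XorZero ⊕ B3, g (pairsOf C)
      = ∑ D : {j : E // j ≠ e} → XorZero ⊕ B3, 3 *
          ∑ p : Bool × Bool, g (Function.update (pairsOf (recomb e x₀ D)) e p) := by
    rw [sum_split e]
    rw [Finset.sum_comm]
    refine Finset.sum_congr rfl fun D _ => ?_
    rw [← sum_om (fun p => g (Function.update (pairsOf (recomb e x₀ D)) e p))]
    refine Finset.sum_congr rfl fun x _ => ?_
    rw [pairsOf_recomb e x D, update_recomb e x x₀ D]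
  have rhs : ∀ p : Bool × Bool, ∑ C : ∀ _ : E, XorZero ⊕ B3,
      g (Function.update (pairsOf C) e p)
      = 12 * ∑ D : {j : E // j ≠ e} → XorZero ⊕ B3,
          g (Function.update (pairsOf (recomb e x₀ D)) e p) := by
    intro p
    rw [sum_split e (fun C => g (Function.update (pairsOf C) e p))]
    have : ∀ x : XorZero ⊕ B3, ∑ D : {j : E // j ≠ e} → XorZero ⊕ B3,
        g (Function.update (pairsOf (recomb e x D)) e p)
        = ∑ D : {j : E // j ≠ e} → XorZero ⊕ B3,
            g (Function.update (pairsOf (recomb e x₀ D)) e p) := by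
      intro x
      exact Finset.sum_congr rfl fun D _ => by rw [update_recomb e x x₀ D]
    rw [Finset.sum_congr rfl fun x _ => this x, Finset.sum_const, Finset.card_univ, card_om,
      nsmul_eq_mul]
    norm_num
  rw [lhs]
  rw [Finset.sum_congr rfl fun p _ => rhs p]
  calc ∑ D : {j : E // j ≠ e} → XorZero ⊕ B3, 3 *
          ∑ p : Bool × Bool, g (Function.update (pairsOf (recomb e x₀ D)) e p)
      = ∑ D : {j : E // j ≠ e} → XorZero ⊕ B3, ∑ p : Bool × Bool,
          3 * g (Function.update (pairsOf (recomb e x₀ D)) e p) :=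
        Finset.sum_congr rfl fun D _ => Finset.mul_sum _ _ _
    _ = ∑ p : Bool × Bool, ∑ D : {j : E // j ≠ e} → XorZero ⊕ B3,
          3 * g (Function.update (pairsOf (recomb e x₀ D)) e p) := Finset.sum_comm
    _ = ∑ p : Bool × Bool, 1 / 4 * (12 * ∑ D : {j : E // j ≠ e} → XorZero ⊕ B3,
          g (Function.update (pairsOf (recomb e x₀ D)) e p)) := by
        refine Finset.sum_congr rfl fun p _ => ?_
        rw [← Finset.mul_sum]
        ring
    _ = 1 / 4 * ∑ p : Bool × Bool, 12 * ∑ D : {j : E // j ≠ e} → XorZero ⊕ B3,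
          g (Function.update (pairsOf (recomb e x₀ D)) e p) := (Finset.mul_sum _ _ _).symm

/-- Main lemma: the pushforward of the tree measure to pair configurations is
independent of the tree. -/
lemma tree_sum (T : GTree E (fun _ => XorZero) (fun _ => B3)) :
    ∀ rem : Finset E, T.complete rem → ∀ g : (E → Bool × Bool) → ℝ,
    ∑ C : ∀ _ : E, XorZero ⊕ B3, T.mass massXor massAll C * g (pairsOf C)
      = (1 / 12 : ℝ) ^ rem.card * ∑ C : ∀ _ : E, XorZero ⊕ B3, g (pairsOf C) := by
  induction T with
  | leaf =>
      intro rem hrem g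
      have : rem = ∅ := hrem
      simp [GTree.mass, this]
  | node1 e ch ih =>
      intro rem hrem g
      obtain ⟨he, hch⟩ := hrem
      rw [sum_split e (fun C => GTree.mass massXor massAll (.node1 e ch) C * g (pairsOf C)),
        Fintype.sum_sum_type]
      have hzero : ∀ z : B3, ∑ D : {j : E // j ≠ e} → XorZero ⊕ B3,
          GTree.mass massXor massAll (.node1 e ch) (recomb e (.inr z) D)
            * g (pairsOf (recomb e (.inr z) D)) = 0 := by
        intro z
        refine Finset.sum_eq_zero fun D _ => ?_
        simp [GTree.mass]
      rw [Finset.sum_congr rfl fun z _ => hzero z, Finset.sum_const_zero, add_zero]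
      have hstep : ∀ y : XorZero, ∑ D : {j : E // j ≠ e} → XorZero ⊕ B3,
          GTree.mass massXor massAll (.node1 e ch) (recomb e (.inl y) D)
            * g (pairsOf (recomb e (.inl y) D))
          = (1 / 4 : ℝ) * ((1 / 12 : ℝ) * ((1 / 12 : ℝ) ^ (rem.erase e).card *
              ∑ C : ∀ _ : E, XorZero ⊕ B3,
                g (Function.update (pairsOf C) e (pr y)))) := by
        intro y
        have key : ∑ C : ∀ _ : E, XorZero ⊕ B3, (ch y).mass massXor massAll C *
            g (Function.update (pairsOf C) e (pr y))
            = (1 / 12 : ℝ) ^ (rem.erase e).card * ∑ C : ∀ _ : E, XorZero ⊕ B3,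
                g (Function.update (pairsOf C) e (pr y)) := by
          exact ih y (rem.erase e) (hch y) (fun q => g (Function.update q e (pr y)))
        have expand : ∑ C : ∀ _ : E, XorZero ⊕ B3, (ch y).mass massXor massAll C *
            g (Function.update (pairsOf C) e (pr y))
            = 12 * ∑ D : {j : E // j ≠ e} → XorZero ⊕ B3,
                (ch y).mass massXor massAll (recomb e (.inl y) D)
                  * g (pairsOf (recomb e (.inl y) D)) := by
          rw [sum_split e (fun C => (ch y).mass massXor massAll C *
            g (Function.update (pairsOf C) e (pr y)))]
          have hx : ∀ x : XorZero ⊕ B3, ∑ D : {j : E // j ≠ e} → XorZero ⊕ B3,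
              (ch y).mass massXor massAll (recomb e x D)
                * g (Function.update (pairsOf (recomb e x D)) e (pr y))
              = ∑ D : {j : E // j ≠ e} → XorZero ⊕ B3,
                  (ch y).mass massXor massAll (recomb e (.inl y) D)
                    * g (pairsOf (recomb e (.inl y) D)) := by
            intro x
            refine Finset.sum_congr rfl fun D _ => ?_
            have hm : (ch y).mass massXor massAll (recomb e x D)
                = (ch y).mass massXor massAll (recomb e (.inl y) D) := by
              refine mass_congr _ _ (ch y) (rem.erase e) (hch y) _ _ fun j hj => ?_
              have hj' : j ≠ e := Finset.ne_of_mem_erase hj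
              rw [recomb_ne e _ _ hj', recomb_ne e _ _ hj']
            have hg : g (Function.update (pairsOf (recomb e x D)) e (pr y))
                = g (pairsOf (recomb e (.inl y) D)) := by
              rw [update_recomb e x (.inl y) D, pairsOf_recomb e (.inl y) D, pairOf_inl,
                Function.update_idem]
            rw [hm, hg]
          rw [Finset.sum_congr rfl fun x _ => hx x, Finset.sum_const, Finset.card_univ,
            card_om, nsmul_eq_mul]
          norm_num
        have h12 : ∑ D : {j : E // j ≠ e} → XorZero ⊕ B3,
            (ch y).mass massXor massAll (recomb e (.inl y) D)
              * g (pairsOf (recomb e (.inl y) D))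
            = (1 / 12 : ℝ) * ((1 / 12 : ℝ) ^ (rem.erase e).card *
                ∑ C : ∀ _ : E, XorZero ⊕ B3, g (Function.update (pairsOf C) e (pr y))) := by
          rw [← key, expand]; ring
        have hpt : ∀ D : {j : E // j ≠ e} → XorZero ⊕ B3,
            GTree.mass massXor massAll (.node1 e ch) (recomb e (.inl y) D)
              * g (pairsOf (recomb e (.inl y) D))
            = (1 / 4 : ℝ) * ((ch y).mass massXor massAll (recomb e (.inl y) D)
              * g (pairsOf (recomb e (.inl y) D))) := by
          intro D
          have hmz : GTree.mass massXor massAll (.node1 e ch) (recomb e (.inl y) D)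
              = (1 / 4 : ℝ) * (ch y).mass massXor massAll (recomb e (.inl y) D) := by
            simp [GTree.mass, massXor]
          rw [hmz, mul_assoc]
        rw [Finset.sum_congr rfl fun D _ => hpt D, ← Finset.mul_sum, h12]
      rw [Finset.sum_congr rfl fun y _ => hstep y]
      have hcard : rem.card = (rem.erase e).card + 1 := (Finset.card_erase_add_one he).symm
      rw [sum_pairs_resample e g]
      rw [← sum_xorZero (fun p => ∑ C : ∀ _ : E, XorZero ⊕ B3,
        g (Function.update (pairsOf C) e p))]
      rw [hcard, pow_succ, Finset.mul_sum, Finset.mul_sum]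
      refine Finset.sum_congr rfl fun y _ => by ring
  | node2 e ch ih =>
      intro rem hrem g
      obtain ⟨he, hch⟩ := hrem
      rw [sum_split e (fun C => GTree.mass massXor massAll (.node2 e ch) C * g (pairsOf C)),
        Fintype.sum_sum_type]
      have hzero : ∀ y : XorZero, ∑ D : {j : E // j ≠ e} → XorZero ⊕ B3,
          GTree.mass massXor massAll (.node2 e ch) (recomb e (.inl y) D)
            * g (pairsOf (recomb e (.inl y) D)) = 0 := by
        intro y
        refine Finset.sum_eq_zero fun D _ => ?_
        simp [GTree.mass]
      rw [Finset.sum_congr rfl fun y _ => hzero y, Finset.sum_const_zero, zero_add]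
      have hstep : ∀ z : B3, ∑ D : {j : E // j ≠ e} → XorZero ⊕ B3,
          GTree.mass massXor massAll (.node2 e ch) (recomb e (.inr z) D)
            * g (pairsOf (recomb e (.inr z) D))
          = (1 / 8 : ℝ) * ((1 / 12 : ℝ) * ((1 / 12 : ℝ) ^ (rem.erase e).card *
              ∑ C : ∀ _ : E, XorZero ⊕ B3,
                g (Function.update (pairsOf C) e (z.1, z.2.1)))) := by
        intro z
        have key : ∑ C : ∀ _ : E, XorZero ⊕ B3, (ch z).mass massXor massAll C *
            g (Function.update (pairsOf C) e (z.1, z.2.1))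
            = (1 / 12 : ℝ) ^ (rem.erase e).card * ∑ C : ∀ _ : E, XorZero ⊕ B3,
                g (Function.update (pairsOf C) e (z.1, z.2.1)) := by
          exact ih z (rem.erase e) (hch z) (fun q => g (Function.update q e (z.1, z.2.1)))
        have expand : ∑ C : ∀ _ : E, XorZero ⊕ B3, (ch z).mass massXor massAll C *
            g (Function.update (pairsOf C) e (z.1, z.2.1))
            = 12 * ∑ D : {j : E // j ≠ e} → XorZero ⊕ B3,
                (ch z).mass massXor massAll (recomb e (.inr z) D)
                  * g (pairsOf (recomb e (.inr z) D)) := by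
          rw [sum_split e (fun C => (ch z).mass massXor massAll C *
            g (Function.update (pairsOf C) e (z.1, z.2.1)))]
          have hx : ∀ x : XorZero ⊕ B3, ∑ D : {j : E // j ≠ e} → XorZero ⊕ B3,
              (ch z).mass massXor massAll (recomb e x D)
                * g (Function.update (pairsOf (recomb e x D)) e (z.1, z.2.1))
              = ∑ D : {j : E // j ≠ e} → XorZero ⊕ B3,
                  (ch z).mass massXor massAll (recomb e (.inr z) D)
                    * g (pairsOf (recomb e (.inr z) D)) := by
            intro x
            refine Finset.sum_congr rfl fun D _ => ?_
            have hm : (ch z).mass massXor massAll (recomb e x D)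
                = (ch z).mass massXor massAll (recomb e (.inr z) D) := by
              refine mass_congr _ _ (ch z) (rem.erase e) (hch z) _ _ fun j hj => ?_
              have hj' : j ≠ e := Finset.ne_of_mem_erase hj
              rw [recomb_ne e _ _ hj', recomb_ne e _ _ hj']
            have hg : g (Function.update (pairsOf (recomb e x D)) e (z.1, z.2.1))
                = g (pairsOf (recomb e (.inr z) D)) := by
              rw [update_recomb e x (.inr z) D, pairsOf_recomb e (.inr z) D, pairOf_inr,
                Function.update_idem]
            rw [hm, hg]
          rw [Finset.sum_congr rfl fun x _ => hx x, Finset.sum_const, Finset.card_univ,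
            card_om, nsmul_eq_mul]
          norm_num
        have h12 : ∑ D : {j : E // j ≠ e} → XorZero ⊕ B3,
            (ch z).mass massXor massAll (recomb e (.inr z) D)
              * g (pairsOf (recomb e (.inr z) D))
            = (1 / 12 : ℝ) * ((1 / 12 : ℝ) ^ (rem.erase e).card *
                ∑ C : ∀ _ : E, XorZero ⊕ B3,
                  g (Function.update (pairsOf C) e (z.1, z.2.1))) := by
          rw [← key, expand]; ring
        have hpt : ∀ D : {j : E // j ≠ e} → XorZero ⊕ B3,
            GTree.mass massXor massAll (.node2 e ch) (recomb e (.inr z) D)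
              * g (pairsOf (recomb e (.inr z) D))
            = (1 / 8 : ℝ) * ((ch z).mass massXor massAll (recomb e (.inr z) D)
              * g (pairsOf (recomb e (.inr z) D))) := by
          intro D
          have hmz : GTree.mass massXor massAll (.node2 e ch) (recomb e (.inr z) D)
              = (1 / 8 : ℝ) * (ch z).mass massXor massAll (recomb e (.inr z) D) := by
            simp [GTree.mass, massAll]
          rw [hmz, mul_assoc]
        rw [Finset.sum_congr rfl fun D _ => hpt D, ← Finset.mul_sum, h12]
      rw [Finset.sum_congr rfl fun z _ => hstep z]
      have hcard : rem.card = (rem.erase e).card + 1 := (Finset.card_erase_add_one he).symm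
      rw [sum_pairs_resample e g]
      rw [show (1 / 4 : ℝ) * ∑ p : Bool × Bool, ∑ C : ∀ _ : E, XorZero ⊕ B3,
            g (Function.update (pairsOf C) e p)
          = (1 / 8 : ℝ) * ∑ z : B3, ∑ C : ∀ _ : E, XorZero ⊕ B3,
            g (Function.update (pairsOf C) e (z.1, z.2.1)) from by
        rw [sum_b3 (fun p => ∑ C : ∀ _ : E, XorZero ⊕ B3,
          g (Function.update (pairsOf C) e p))]; ring]
      rw [hcard, pow_succ]
      simp only [Finset.mul_sum]
      refine Finset.sum_congr rfl fun z _ => Finset.sum_congr rfl fun C _ => by ring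

/-- The structured equivalence between values and (pair, extra data). -/
def omEquiv : (XorZero ⊕ B3) ≃ (Bool × Bool) × Option Bool where
  toFun x := match x with
    | .inl y => (pr y, none)
    | .inr z => ((z.1, z.2.1), some z.2.2)
  invFun w := match w.2 with
    | none => .inl (XorZero.equivPair.symm w.1)
    | some c => .inr (w.1.1, w.1.2, c)
  left_inv := by decide
  right_inv := by decide

@[simp] lemma omEquiv_fst (x : XorZero ⊕ B3) : (omEquiv x).1 = pairOf x := by
  cases x <;> rfl

/-- Full configuration equivalence. -/
def confEquiv : (∀ _ : E, XorZero ⊕ B3) ≃ (E → Bool × Bool) × (E → Option Bool) :=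
  (Equiv.arrowCongr (Equiv.refl E) omEquiv).trans
    (Equiv.arrowProdEquivProdArrow _ _ _)

lemma confEquiv_fst (C : ∀ _ : E, XorZero ⊕ B3) : (confEquiv C).1 = pairsOf C := by
  funext e
  show (omEquiv (C e)).1 = pairOf (C e)
  exact omEquiv_fst _

lemma confEquiv_snd (C : ∀ _ : E, XorZero ⊕ B3) (e : E) :
    (confEquiv C).2 e = (omEquiv (C e)).2 := rfl

lemma sum_pairs_count (g : (E → Bool × Bool) → ℝ) :
    ∑ C : ∀ _ : E, XorZero ⊕ B3, g (pairsOf C)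
      = (3 : ℝ) ^ Fintype.card E * ∑ q : E → Bool × Bool, g q := by
  rw [← Equiv.sum_comp (confEquiv (E := E)).symm
    (fun C : ∀ _ : E, XorZero ⊕ B3 => g (pairsOf C))]
  have : ∀ w : (E → Bool × Bool) × (E → Option Bool),
      g (pairsOf ((confEquiv (E := E)).symm w)) = g w.1 := by
    intro w
    rw [← confEquiv_fst ((confEquiv (E := E)).symm w), Equiv.apply_symm_apply]
  rw [Finset.sum_congr rfl fun w _ => this w, Fintype.sum_prod_type]
  have hconst : ∀ q : E → Bool × Bool,
      ∑ _t : E → Option Bool, g q = (3 : ℝ) ^ Fintype.card E * g q := by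
    intro q
    rw [Finset.sum_const, Finset.card_univ, Fintype.card_fun, nsmul_eq_mul]
    push_cast
    simp
  rw [Finset.sum_congr rfl fun q _ => hconst q, ← Finset.mul_sum]


noncomputable def tau1 : Option Bool → ℝ := fun o => match o with | none => 1 / 4 | some _ => 0

noncomputable def tau2 : Option Bool → ℝ := fun o => match o with | none => 0 | some _ => 1 / 8

lemma mass1_eq_s13 (C : ∀ _ : E, XorZero ⊕ B3) :
    mass1 massXor C = ∏ e, tau1 ((omEquiv (C e)).2) := by
  unfold mass1
  refine Finset.prod_congr rfl fun e _ => ?_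
  cases C e with
  | inl y => simp [massXor, omEquiv, tau1]
  | inr z => simp [omEquiv, tau1]

lemma mass2_eq_s13 (C : ∀ _ : E, XorZero ⊕ B3) :
    mass2 massAll C = ∏ e, tau2 ((omEquiv (C e)).2) := by
  unfold mass2
  refine Finset.prod_congr rfl fun e _ => ?_
  cases C e with
  | inl y => simp [omEquiv, tau2]
  | inr z => simp [massAll, omEquiv, tau2]

lemma sum_tau (τ : Option Bool → ℝ) (hτ : ∑ o : Option Bool, τ o = 1 / 4)
    (g : (E → Bool × Bool) → ℝ) :
    ∑ C : ∀ _ : E, XorZero ⊕ B3, (∏ e, τ ((omEquiv (C e)).2)) * g (pairsOf C)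
      = (1 / 4 : ℝ) ^ Fintype.card E * ∑ q : E → Bool × Bool, g q := by
  rw [← Equiv.sum_comp (confEquiv (E := E)).symm
    (fun C : ∀ _ : E, XorZero ⊕ B3 => (∏ e, τ ((omEquiv (C e)).2)) * g (pairsOf C))]
  have hw : ∀ w : (E → Bool × Bool) × (E → Option Bool),
      (∏ e, τ ((omEquiv (((confEquiv (E := E)).symm w) e)).2))
        * g (pairsOf ((confEquiv (E := E)).symm w))
      = (∏ e, τ (w.2 e)) * g w.1 := by
    intro w
    have h1 : pairsOf ((confEquiv (E := E)).symm w) = w.1 := by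
      rw [← confEquiv_fst ((confEquiv (E := E)).symm w), Equiv.apply_symm_apply]
    have h2 : ∀ e, (omEquiv (((confEquiv (E := E)).symm w) e)).2 = w.2 e := by
      intro e
      rw [← confEquiv_snd ((confEquiv (E := E)).symm w) e, Equiv.apply_symm_apply]
    rw [h1, Finset.prod_congr rfl fun e _ => by rw [h2 e]]
  rw [Finset.sum_congr rfl fun w _ => hw w, Fintype.sum_prod_type]
  have hq : ∀ q : E → Bool × Bool,
      ∑ t : E → Option Bool, (∏ e, τ (t e)) * g q
        = (1 / 4 : ℝ) ^ Fintype.card E * g q := by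
    intro q
    rw [← Finset.sum_mul, ← Fintype.prod_sum (fun _ : E => τ)]
    rw [Finset.prod_congr rfl fun e (_ : e ∈ Finset.univ) => hτ, Finset.prod_const,
      Finset.card_univ]
  rw [Finset.sum_congr rfl fun q _ => hq q, ← Finset.mul_sum]

lemma sum_tau1 : ∑ o : Option Bool, tau1 o = 1 / 4 := by
  rw [Fintype.sum_option]
  simp [tau1]

lemma sum_tau2 : ∑ o : Option Bool, tau2 o = 1 / 4 := by
  rw [Fintype.sum_option]
  simp [tau2]
  norm_num

/-- The indicator of the pair event. -/
noncomputable def chi (U V : Set (E → Bool)) : (E → Bool × Bool) → ℝ :=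
  Set.indicator {q | (fun e => (q e).1) ∈ U ∧ (fun e => (q e).2) ∈ V} 1

lemma mem_coordEvent (U V : Set (E → Bool)) (C : E → XorZero ⊕ B3) :
    C ∈ CoordEvent₂ U V ↔ pairsOf C ∈
      {q : E → Bool × Bool | (fun e => (q e).1) ∈ U ∧ (fun e => (q e).2) ∈ V} :=
  Iff.rfl

lemma indicator_eq (U V : Set (E → Bool)) (m : (∀ _ : E, XorZero ⊕ B3) → ℝ)
    (C : ∀ _ : E, XorZero ⊕ B3) :
    (CoordEvent₂ U V).indicator m C = m C * chi U V (pairsOf C) := by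
  classical
  by_cases h : C ∈ CoordEvent₂ U V
  · rw [Set.indicator_of_mem h, chi, Set.indicator_of_mem ((mem_coordEvent U V C).1 h)]
    simp
  · rw [Set.indicator_of_notMem h, chi,
      Set.indicator_of_notMem (fun hc => h ((mem_coordEvent U V C).2 hc))]
    simp

/-- Pairwise part of the decision tree colored-percolation theorem:
`P(C₁ ∈ U×V) = P(C ∈ U×V) = P(C₂ ∈ U×V)`. -/
theorem colored_pairwise
    (U V : Set (E → Bool)) (hU : UpwardClosed U) (hV : UpwardClosed V)
    (T : GTree E (fun _ => XorZero) (fun _ => B3)) (hT : T.complete Finset.univ) :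
    PrOf (mass1 (massXor (E := E))) (CoordEvent₂ U V)
        = PrOf (T.mass massXor massAll) (CoordEvent₂ U V) ∧
      PrOf (T.mass massXor massAll) (CoordEvent₂ U V)
        = PrOf (mass2 (massAll (E := E))) (CoordEvent₂ U V) := by
  have key1 : PrOf (mass1 (massXor (E := E))) (CoordEvent₂ U V)
      = (1 / 4 : ℝ) ^ Fintype.card E * ∑ q : E → Bool × Bool, chi U V q := by
    unfold PrOf
    rw [Finset.sum_congr rfl fun C _ => indicator_eq U V _ C]
    rw [Finset.sum_congr rfl fun C (_ : C ∈ Finset.univ) => by rw [mass1_eq_s13 C]]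
    exact sum_tau tau1 sum_tau1 (chi U V)
  have key2 : PrOf (mass2 (massAll (E := E))) (CoordEvent₂ U V)
      = (1 / 4 : ℝ) ^ Fintype.card E * ∑ q : E → Bool × Bool, chi U V q := by
    unfold PrOf
    rw [Finset.sum_congr rfl fun C _ => indicator_eq U V _ C]
    rw [Finset.sum_congr rfl fun C (_ : C ∈ Finset.univ) => by rw [mass2_eq_s13 C]]
    exact sum_tau tau2 sum_tau2 (chi U V)
  have keyT : PrOf (T.mass massXor massAll) (CoordEvent₂ U V)
      = (1 / 4 : ℝ) ^ Fintype.card E * ∑ q : E → Bool × Bool, chi U V q := by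
    unfold PrOf
    rw [Finset.sum_congr rfl fun C _ => indicator_eq U V _ C]
    rw [tree_sum T Finset.univ hT (chi U V), sum_pairs_count (chi U V), Finset.card_univ,
      ← mul_assoc, ← mul_pow]
    norm_num
  exact ⟨key1.trans keyT.symm, keyT.trans key2.symm⟩


end GenDT
end
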